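/- arXiv:math/0209384 — 3 statements merged into one kernel-verified Lean document; each statement's English description precedes it below -/
import Mathlib

section
/- Let m ≥ 2, σ > 1, H > 0, and let Q : (0,∞) → ℝ be a positive non-decreasing function with Q(t) = o(t²) as t → +∞ and liminf_{r→+∞} Q(r)·(log r)/r² < +∞. Let a, b : ℝ^m → ℝ be continuous with b(x) ≥ 1/Q(|x|) for |x| > 0, a_-(x) = max(−a(x), 0) bounded on ℝ^m, and a_-(x)/b(x) ≤ H on ℝ^m. Let f : ℝ → ℝ be continuous with liminf_{t→+∞} f(t)/t^σ > 0. If u ∈ C²(ℝ^m) is a non-negative function satisfying Δu(x) ≥ b(x) f(u(x)) + a(x) u(x) for all x ∈ ℝ^m, then sup_{ℝ^m} u < +∞. -/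
open Filter Asymptotics

/-- The Laplacian on Euclidean space: the sum of the pure second partial derivatives. -/
noncomputable def euclideanLaplacian {m : ℕ} (u : EuclideanSpace ℝ (Fin m) → ℝ)
    (x : EuclideanSpace ℝ (Fin m)) : ℝ :=
  ∑ i, fderiv ℝ (fun y => fderiv ℝ u y (EuclideanSpace.single i 1)) x (EuclideanSpace.single i 1)

set_option maxHeartbeats 1600000

lemma secondDeriv_nonpos_of_isLocalMax {h : ℝ → ℝ}
    (hmax : IsLocalMax h 0)
    (hdiff : ∀ᶠ t in nhds (0:ℝ), DifferentiableAt ℝ h t)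
    (hd2 : DifferentiableAt ℝ (deriv h) 0) :
    deriv (deriv h) 0 ≤ 0 := by
  by_contra hpos
  push_neg at hpos
  have hq0 : deriv h 0 = 0 := hmax.deriv_eq_zero
  have hslope : Filter.Tendsto (slope (deriv h) 0) (nhdsWithin 0 {(0:ℝ)}ᶜ)
      (nhds (deriv (deriv h) 0)) := hasDerivAt_iff_tendsto_slope.mp hd2.hasDerivAt
  have hev : ∀ᶠ t in nhdsWithin 0 {(0:ℝ)}ᶜ, 0 < slope (deriv h) 0 t :=
    hslope.eventually (eventually_gt_nhds hpos)
  have hev' : ∀ᶠ t in nhdsWithin (0:ℝ) (Set.Ioi 0), 0 < deriv h t := by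
    have hmono : nhdsWithin (0:ℝ) (Set.Ioi 0) ≤ nhdsWithin 0 {(0:ℝ)}ᶜ := by
      apply nhdsWithin_mono
      intro t ht
      exact ne_of_gt ht
    filter_upwards [hmono hev, self_mem_nhdsWithin] with t ht ht'
    have : slope (deriv h) 0 t = deriv h t / t := by
      simp [slope, hq0, div_eq_inv_mul]
    rw [this] at ht
    have ht0 : (0:ℝ) < t := ht'
    have := mul_pos ht ht0
    rwa [div_mul_cancel₀] at this
    exact ne_of_gt ht0
  -- get an interval (0, ε) where deriv h > 0
  rw [eventually_nhdsWithin_iff] at hev'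
  obtain ⟨ε1, hε1, h1⟩ := Metric.eventually_nhds_iff.mp hev'
  obtain ⟨ε2, hε2, h2⟩ := Metric.eventually_nhds_iff.mp hdiff
  obtain ⟨ε3, hε3, h3⟩ := Metric.eventually_nhds_iff.mp hmax
  set b := min ε1 (min ε2 ε3) / 2 with hb
  have hbpos : 0 < b := by positivity
  have hblt1 : b < ε1 := by
    have : b ≤ ε1 / 2 := by
      apply div_le_div_of_nonneg_right _ (by norm_num)
      exact min_le_left _ _
    linarith
  have hblt2 : b < ε2 := by
    have : b ≤ ε2 / 2 := by
      apply div_le_div_of_nonneg_right _ (by norm_num)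
      exact le_trans (min_le_right _ _) (min_le_left _ _)
    linarith
  have hblt3 : b < ε3 := by
    have : b ≤ ε3 / 2 := by
      apply div_le_div_of_nonneg_right _ (by norm_num)
      exact le_trans (min_le_right _ _) (min_le_right _ _)
    linarith
  have hmono : StrictMonoOn h (Set.Icc 0 b) := by
    apply strictMonoOn_of_deriv_pos (convex_Icc 0 b)
    · apply ContinuousOn.mono (s := Set.Icc (-b) b)
      · intro t ht
        refine (h2 ?_).continuousAt.continuousWithinAt
        rw [Real.dist_eq, sub_zero]
        rcases ht with ⟨hl, hr⟩
        rw [abs_lt]; constructor <;> linarith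
      · intro t ht; exact ⟨by linarith [ht.1], ht.2⟩
    · intro t ht
      rw [interior_Icc] at ht
      refine h1 ?_ ht.1
      rw [Real.dist_eq, sub_zero, abs_of_pos ht.1]; linarith [ht.2]
  have hlt : h 0 < h b := hmono ⟨le_refl 0, le_of_lt hbpos⟩ ⟨le_of_lt hbpos, le_refl b⟩ hbpos
  have := h3 (by rw [Real.dist_eq, sub_zero, abs_of_pos hbpos]; exact hblt3)
  linarith

lemma fderiv_fderiv_nonpos_of_isLocalMax {E : Type*} [NormedAddCommGroup E] [NormedSpace ℝ E]
    {g : E → ℝ} {x₀ v : E}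
    (hg : ∀ᶠ y in nhds x₀, DifferentiableAt ℝ g y)
    (hg2 : DifferentiableAt ℝ (fun y => fderiv ℝ g y v) x₀)
    (hmax : IsLocalMax g x₀) :
    fderiv ℝ (fun y => fderiv ℝ g y v) x₀ v ≤ 0 := by
  set ℓ : ℝ → E := fun t => x₀ + t • v with hℓ
  have hℓ0 : ℓ 0 = x₀ := by simp [hℓ]
  have hℓd : ∀ t : ℝ, HasDerivAt ℓ v t := by
    intro t
    have h1 : HasDerivAt (fun t : ℝ => t • v) ((1:ℝ) • v) t := (hasDerivAt_id t).smul_const v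
    have h2 : HasDerivAt (fun t : ℝ => t • v) v t := by simpa using h1
    exact h2.const_add x₀
  have hℓc : Continuous ℓ := (continuous_const.add (continuous_id.smul continuous_const))
  have hℓt : Tendsto ℓ (nhds 0) (nhds x₀) := by
    rw [← hℓ0]; exact hℓc.continuousAt
  set h : ℝ → ℝ := fun t => g (ℓ t) with hh
  have hnear : ∀ᶠ t in nhds (0:ℝ), DifferentiableAt ℝ g (ℓ t) := hℓt.eventually hg
  have hder : ∀ᶠ t in nhds (0:ℝ), HasDerivAt h (fderiv ℝ g (ℓ t) v) t := by
    filter_upwards [hnear] with t ht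
    exact ht.hasFDerivAt.comp_hasDerivAt t (hℓd t)
  have hdiffh : ∀ᶠ t in nhds (0:ℝ), DifferentiableAt ℝ h t := by
    filter_upwards [hder] with t ht using ht.differentiableAt
  have hdeq : deriv h =ᶠ[nhds (0:ℝ)] fun t => fderiv ℝ g (ℓ t) v := by
    filter_upwards [hder] with t ht using ht.deriv
  have hd2' : HasDerivAt (fun t => fderiv ℝ g (ℓ t) v)
      (fderiv ℝ (fun y => fderiv ℝ g y v) x₀ v) 0 :=
    hg2.hasFDerivAt.comp_hasDerivAt_of_eq 0 (hℓd 0) hℓ0.symm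
  have hd2h : DifferentiableAt ℝ (deriv h) 0 := by
    rw [hdeq.differentiableAt_iff]
    exact hd2'.differentiableAt
  have hvaleq : deriv (deriv h) 0 = fderiv ℝ (fun y => fderiv ℝ g y v) x₀ v := by
    rw [hdeq.deriv_eq]
    exact hd2'.deriv
  have hmaxh : IsLocalMax h 0 := by
    have := hℓt.eventually hmax
    filter_upwards [this] with t ht
    simpa [hh, hℓ0] using ht
  rw [← hvaleq]
  exact secondDeriv_nonpos_of_isLocalMax hmaxh hdiffh hd2h

variable {m : ℕ}

local notation "E" => EuclideanSpace ℝ (Fin m)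

lemma hasFDerivAt_S (z y : E) :
    HasFDerivAt (fun y : E => ∑ i, (y i - z i)^2)
      (∑ i, (2 * (y i - z i)) • (EuclideanSpace.proj i : E →L[ℝ] ℝ)) y := by
  apply HasFDerivAt.fun_sum
  intro i _
  have h1 : HasFDerivAt (fun y : E => y i - z i)
      (EuclideanSpace.proj i : E →L[ℝ] ℝ) y :=
    (EuclideanSpace.proj (𝕜 := ℝ) i).hasFDerivAt.sub_const (z i)
  have h2 := h1.mul h1
  have heq : (fun y : E => (y i - z i)^2) = fun y : E => (y i - z i) * (y i - z i) := by
    ext y; ring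
  rw [heq]
  exact h2.congr_fderiv (by rw [two_mul, add_smul])

lemma Ld_apply (z y : E) (i : Fin m) :
    (∑ j, (2 * (y j - z j)) • (EuclideanSpace.proj j : E →L[ℝ] ℝ))
      (EuclideanSpace.single i 1) = 2 * (y i - z i) := by
  simp [ContinuousLinearMap.sum_apply, EuclideanSpace.single_apply]

lemma S_eq_norm (z y : E) : ∑ i, (y i - z i)^2 = ‖y - z‖^2 := by
  rw [EuclideanSpace.norm_eq, Real.sq_sqrt (by positivity)]
  congr 1
  ext i
  simp [Real.norm_eq_abs, sq_abs]

lemma S_nonneg (z y : E) : 0 ≤ ∑ i, (y i - z i)^2 := by positivity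

lemma S_cont (z : E) : Continuous (fun y : E => ∑ i, (y i - z i)^2) := by
  apply continuous_finset_sum
  intro i _
  exact (((EuclideanSpace.proj (𝕜 := ℝ) i).continuous).sub continuous_const).pow 2

lemma hasDerivAt_phi (A p R2 : ℝ) {s : ℝ} (hs : s < R2) :
    HasDerivAt (fun s : ℝ => A * (R2 - s) ^ p) (-A * p * (R2 - s) ^ (p - 1)) s := by
  have hbase : (0:ℝ) < R2 - s := by linarith
  have h1 : HasDerivAt (fun s : ℝ => R2 - s) (-1) s := by
    simpa using (hasDerivAt_id s).const_sub R2
  have h2 : HasDerivAt (fun x : ℝ => x ^ p) (p * (R2 - s) ^ (p - 1)) (R2 - s) :=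
    Real.hasDerivAt_rpow_const (Or.inl hbase.ne')
  have h3 := (h2.comp s h1).const_mul A
  exact h3.congr_deriv (by ring)

/-- derivative of w at points inside the ball -/
lemma hasFDerivAt_w (z : E) (R2 A q T : ℝ) {y : E} (hy : ∑ i, (y i - z i)^2 < R2) :
    HasFDerivAt (fun y : E => T + A * (R2 - ∑ i, (y i - z i)^2) ^ (-q))
      ((A * q * (R2 - ∑ i, (y i - z i)^2) ^ (-q - 1)) •
        (∑ i, (2 * (y i - z i)) • (EuclideanSpace.proj i : E →L[ℝ] ℝ))) y := by
  have hφ := ((hasDerivAt_phi A (-q) R2 hy).const_add T)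
  have h := hφ.comp_hasFDerivAt y (hasFDerivAt_S z y)
  exact h.congr_fderiv (by congr 1; ring)

lemma fderiv_w_apply (z : E) (R2 A q T : ℝ) {y : E} (hy : ∑ i, (y i - z i)^2 < R2) (i : Fin m) :
    fderiv ℝ (fun y : E => T + A * (R2 - ∑ i, (y i - z i)^2) ^ (-q)) y
      (EuclideanSpace.single i 1)
      = (A * q * (R2 - ∑ i, (y i - z i)^2) ^ (-q - 1)) * (2 * (y i - z i)) := by
  rw [(hasFDerivAt_w z R2 A q T hy).fderiv]
  rw [ContinuousLinearMap.smul_apply, Ld_apply]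
  simp

lemma hasFDerivAt_Wi (z : E) (R2 A q : ℝ) {x : E} (hx : ∑ i, (x i - z i)^2 < R2) (i : Fin m) :
    HasFDerivAt (fun y : E =>
        (A * q * (R2 - ∑ j, (y j - z j)^2) ^ (-q - 1)) * (2 * (y i - z i)))
      ((A * q * (R2 - ∑ j, (x j - z j)^2) ^ (-q - 1)) •
          ((2:ℝ) • (EuclideanSpace.proj i : E →L[ℝ] ℝ))
        + (2 * (x i - z i)) •
          ((A * q * (q+1) * (R2 - ∑ j, (x j - z j)^2) ^ (-q - 2)) •
            (∑ j, (2 * (x j - z j)) • (EuclideanSpace.proj j : E →L[ℝ] ℝ)))) x := by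
  have hG : HasFDerivAt (fun y : E => 2 * (y i - z i))
      ((2:ℝ) • (EuclideanSpace.proj i : E →L[ℝ] ℝ)) x :=
    ((EuclideanSpace.proj (𝕜 := ℝ) i).hasFDerivAt.sub_const (z i)).const_mul 2
  have hφ := hasDerivAt_phi (A * q) (-q - 1) R2 hx
  have hP := hφ.comp_hasFDerivAt x (hasFDerivAt_S z x)
  have hP' : HasFDerivAt (fun y : E => A * q * (R2 - ∑ j, (y j - z j)^2) ^ (-q - 1))
      ((A * q * (q+1) * (R2 - ∑ j, (x j - z j)^2) ^ (-q - 2)) •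
        (∑ j, (2 * (x j - z j)) • (EuclideanSpace.proj j : E →L[ℝ] ℝ))) x := by
    have he : (-q - 1 - 1 : ℝ) = -q - 2 := by ring
    have hc : (-(A * q) * (-q - 1) : ℝ) = A * q * (q+1) := by ring
    rw [he, hc] at hP
    exact hP
  exact hP'.mul hG

lemma laplacian_w (z : E) (R2 A q T : ℝ) {x : E} (hx : ∑ i, (x i - z i)^2 < R2) :
    euclideanLaplacian (fun y : E => T + A * (R2 - ∑ i, (y i - z i)^2) ^ (-q)) x
      = 2 * m * (A * q * (R2 - ∑ i, (x i - z i)^2) ^ (-q - 1))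
        + 4 * (∑ i, (x i - z i)^2) *
          (A * q * (q+1) * (R2 - ∑ i, (x i - z i)^2) ^ (-q - 2)) := by
  have hopen : IsOpen {y : E | ∑ j, (y j - z j)^2 < R2} := by
    have : Continuous (fun y : E => ∑ j, (y j - z j)^2) := by
      apply continuous_finset_sum
      intro j _
      exact (((EuclideanSpace.proj (𝕜 := ℝ) j).continuous).sub continuous_const).pow 2
    exact isOpen_lt this continuous_const
  have hterm : ∀ i : Fin m,
      fderiv ℝ (fun y => fderiv ℝ (fun y : E => T + A * (R2 - ∑ i, (y i - z i)^2) ^ (-q)) y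
        (EuclideanSpace.single i 1)) x (EuclideanSpace.single i 1)
      = (A * q * (R2 - ∑ j, (x j - z j)^2) ^ (-q - 1)) * 2
        + (A * q * (q+1) * (R2 - ∑ j, (x j - z j)^2) ^ (-q - 2)) * (2 * (x i - z i))^2 := by
    intro i
    have hev : (fun y => fderiv ℝ (fun y : E => T + A * (R2 - ∑ i, (y i - z i)^2) ^ (-q)) y
        (EuclideanSpace.single i 1)) =ᶠ[nhds x]
        (fun y => (A * q * (R2 - ∑ j, (y j - z j)^2) ^ (-q - 1)) * (2 * (y i - z i))) := by
      filter_upwards [hopen.mem_nhds hx] with y hy using fderiv_w_apply z R2 A q T hy i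
    rw [hev.fderiv_eq, (hasFDerivAt_Wi z R2 A q hx i).fderiv]
    have hLd := Ld_apply z x i
    have hproj : (EuclideanSpace.proj (𝕜 := ℝ) i : E →L[ℝ] ℝ) (EuclideanSpace.single i 1) = 1 := by
      simp [EuclideanSpace.single_apply]
    simp only [ContinuousLinearMap.add_apply, ContinuousLinearMap.smul_apply, hLd, hproj,
      smul_eq_mul]
    ring
  unfold euclideanLaplacian
  rw [Finset.sum_congr rfl (fun i _ => hterm i), Finset.sum_add_distrib, Finset.sum_const,
    Finset.card_univ, Fintype.card_fin, ← Finset.mul_sum]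
  have : ∑ i : Fin m, (2 * (x i - z i))^2 = 4 * ∑ i, (x i - z i)^2 := by
    rw [Finset.mul_sum]
    apply Finset.sum_congr rfl
    intro i _
    ring
  rw [this]
  push_cast
  ring

lemma laplacian_le_at_localMax {u w : E → ℝ} {x₀ : E}
    (hu : ContDiff ℝ 2 u)
    (hw : ∀ᶠ y in nhds x₀, DifferentiableAt ℝ w y)
    (hw2 : ∀ i : Fin m, DifferentiableAt ℝ
      (fun y => fderiv ℝ w y (EuclideanSpace.single i 1)) x₀)
    (hmax : IsLocalMax (fun y => u y - w y) x₀) :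
    euclideanLaplacian u x₀ ≤ euclideanLaplacian w x₀ := by
  have hud : ∀ y, DifferentiableAt ℝ u y :=
    fun y => (hu.differentiable (by norm_num)).differentiableAt
  have hufd : ContDiff ℝ 1 (fderiv ℝ u) := hu.fderiv_right (by norm_num)
  unfold euclideanLaplacian
  apply Finset.sum_le_sum
  intro i _
  set e : E := EuclideanSpace.single i 1 with he
  have hu2 : DifferentiableAt ℝ (fun y => fderiv ℝ u y e) x₀ :=
    ((hufd.differentiable (by norm_num)).differentiableAt).clm_apply (differentiableAt_const e)
  have hg : ∀ᶠ y in nhds x₀, DifferentiableAt ℝ (fun y => u y - w y) y := by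
    filter_upwards [hw] with y hy using (hud y).sub hy
  have hgeq : (fun y => fderiv ℝ (fun y => u y - w y) y e) =ᶠ[nhds x₀]
      (fun y => fderiv ℝ u y e - fderiv ℝ w y e) := by
    filter_upwards [hw] with y hy
    rw [fderiv_fun_sub (hud y) hy]
    rfl
  have hg2 : DifferentiableAt ℝ (fun y => fderiv ℝ (fun y => u y - w y) y e) x₀ := by
    rw [hgeq.differentiableAt_iff]
    exact hu2.sub (hw2 i)
  have key := fderiv_fderiv_nonpos_of_isLocalMax hg hg2 hmax
  have heq : fderiv ℝ (fun y => fderiv ℝ (fun y => u y - w y) y e) x₀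
      = fderiv ℝ (fun y => fderiv ℝ u y e) x₀ - fderiv ℝ (fun y => fderiv ℝ w y e) x₀ := by
    rw [hgeq.fderiv_eq, fderiv_fun_sub hu2 (hw2 i)]
  rw [heq] at key
  simp only [ContinuousLinearMap.sub_apply] at key
  linarith

lemma local_estimate {σ k R T : ℝ} (hσ : 1 < σ) (hk : 0 < k) (hR : 0 < R) (hT : 0 ≤ T)
    {u : E → ℝ} (hu : ContDiff ℝ 2 u) (z : E)
    (hineq : ∀ y, ‖y - z‖ < R → T ≤ u y → k * u y ^ σ ≤ euclideanLaplacian u y) :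
    u z ≤ T + ((2/(σ-1)) * (2*m + 4*(2/(σ-1)) + 4) / (k * R^2)) ^ (1/(σ-1)) := by
  have hσ1 : 0 < σ - 1 := by linarith
  have hσ0 : 0 < σ := by linarith
  set q : ℝ := 2/(σ-1) with hqdef
  have hq : 0 < q := by positivity
  set C : ℝ := q * (2*m + 4*q + 4) with hCdef
  have hC : 0 < C := by positivity
  set A : ℝ := (C * R^2 / k) ^ (1/(σ-1)) with hAdef
  have hA : 0 < A := Real.rpow_pos_of_pos (by positivity) _
  have hApow : A ^ (σ - 1) = C * R^2 / k := by
    rw [hAdef, ← Real.rpow_mul (by positivity : (0:ℝ) ≤ C * R^2 / k), one_div,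
      inv_mul_cancel₀ hσ1.ne', Real.rpow_one]
  have hqσ : q * σ = q + 2 := by
    have h2 : q * (σ - 1) = 2 := by rw [hqdef]; field_simp
    linear_combination h2
  set S : E → ℝ := fun y => ∑ i, (y i - z i)^2 with hSdef
  have hScont : Continuous S := S_cont z
  have hSnn : ∀ y, 0 ≤ S y := fun y => by
    rw [hSdef]; positivity
  have hSz : S z = 0 := by simp [hSdef]
  set w : E → ℝ := fun y => T + A * (R^2 - S y) ^ (-q) with hwdef
  have hwfun : w = fun y : E => T + A * (R^2 - ∑ i, (y i - z i)^2) ^ (-q) := rfl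
  have hbpos : ∀ y : E, S y < R^2 → 0 < R^2 - S y := fun y hy => by linarith
  have hwT : ∀ y : E, S y < R^2 → T ≤ w y := by
    intro y hy
    have h1 : 0 < (R^2 - S y) ^ (-q) := Real.rpow_pos_of_pos (hbpos y hy) _
    have h2 : 0 < A * (R^2 - S y) ^ (-q) := mul_pos hA h1
    rw [hwdef]; dsimp only; linarith
  have hw0 : ∀ y : E, S y < R^2 → 0 < w y := by
    intro y hy
    have h1 : 0 < (R^2 - S y) ^ (-q) := Real.rpow_pos_of_pos (hbpos y hy) _
    have h2 : 0 < A * (R^2 - S y) ^ (-q) := mul_pos hA h1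
    rw [hwdef]; dsimp only; linarith
  -- Laplacian bound for w
  have hΔw : ∀ x : E, S x < R^2 → euclideanLaplacian w x ≤ k * (w x) ^ σ := by
    intro x hx
    have hb : 0 < R^2 - S x := hbpos x hx
    have hP2 : 0 < (R^2 - S x) ^ (-q - 2) := Real.rpow_pos_of_pos hb _
    have hlap : euclideanLaplacian w x
        = 2 * m * (A * q * (R^2 - S x) ^ (-q - 1))
          + 4 * S x * (A * q * (q+1) * (R^2 - S x) ^ (-q - 2)) := by
      rw [hwfun]
      exact laplacian_w z (R^2) A q T hx
    have e1 : (R^2 - S x) ^ (-q - 1) = (R^2 - S x) ^ (-q - 2) * (R^2 - S x) := by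
      rw [show (-q - 1 : ℝ) = (-q - 2) + 1 by ring, Real.rpow_add_one hb.ne']
    have hup : euclideanLaplacian w x ≤ A * C * R^2 * (R^2 - S x) ^ (-q - 2) := by
      rw [hlap, e1, hCdef]
      have hm0 : (0:ℝ) ≤ 2 * m := by positivity
      have hSx2 : S x ≤ R^2 := hx.le
      have t1 : 2 * m * (A * q * ((R^2 - S x) ^ (-q - 2) * (R^2 - S x)))
          ≤ 2 * m * (A * q * ((R^2 - S x) ^ (-q - 2) * R^2)) := by
        have : (R^2 - S x) ≤ R^2 := by linarith [hSnn x]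
        have h3 : (R^2 - S x) ^ (-q - 2) * (R^2 - S x) ≤ (R^2 - S x) ^ (-q - 2) * R^2 :=
          mul_le_mul_of_nonneg_left this hP2.le
        have h4 : A * q * ((R^2 - S x) ^ (-q - 2) * (R^2 - S x))
            ≤ A * q * ((R^2 - S x) ^ (-q - 2) * R^2) :=
          mul_le_mul_of_nonneg_left h3 (by positivity)
        exact mul_le_mul_of_nonneg_left h4 hm0
      have t2 : 4 * S x * (A * q * (q+1) * (R^2 - S x) ^ (-q - 2))
          ≤ 4 * R^2 * (A * q * (q+1) * (R^2 - S x) ^ (-q - 2)) := by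
        apply mul_le_mul_of_nonneg_right _ (by positivity)
        linarith
      calc 2 * m * (A * q * ((R^2 - S x) ^ (-q - 2) * (R^2 - S x)))
            + 4 * S x * (A * q * (q+1) * (R^2 - S x) ^ (-q - 2))
          ≤ 2 * m * (A * q * ((R^2 - S x) ^ (-q - 2) * R^2))
            + 4 * R^2 * (A * q * (q+1) * (R^2 - S x) ^ (-q - 2)) := by linarith
        _ = A * (q * (2*m + 4*q + 4)) * R^2 * (R^2 - S x) ^ (-q - 2) := by ring
    -- lower bound for k * w^σ
    have hAσ : A ^ σ = A ^ (σ - 1) * A := by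
      rw [show σ = (σ - 1) + 1 by ring]
      rw [Real.rpow_add hA, Real.rpow_one]
      ring_nf
    have hkAσ : k * A ^ σ = A * C * R^2 := by
      rw [hAσ, hApow]; field_simp
    have hwσ : A * C * R^2 * (R^2 - S x) ^ (-q - 2) ≤ k * (w x) ^ σ := by
      have hx1 : (0:ℝ) ≤ A * (R^2 - S x) ^ (-q) := by positivity
      have hle : A * (R^2 - S x) ^ (-q) ≤ w x := by
        rw [hwdef]; dsimp only; linarith
      have hr1 : (A * (R^2 - S x) ^ (-q)) ^ σ ≤ (w x) ^ σ :=
        Real.rpow_le_rpow hx1 hle hσ0.le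
      have hr2 : (A * (R^2 - S x) ^ (-q)) ^ σ = A ^ σ * (R^2 - S x) ^ (-q - 2) := by
        have hexp : (-q * σ : ℝ) = -q - 2 := by linear_combination -hqσ
        rw [Real.mul_rpow hA.le (Real.rpow_pos_of_pos hb _).le,
          ← Real.rpow_mul hb.le, hexp]
      calc A * C * R^2 * (R^2 - S x) ^ (-q - 2) = k * (A ^ σ * (R^2 - S x) ^ (-q - 2)) := by
            rw [← hkAσ]; ring
        _ = k * (A * (R^2 - S x) ^ (-q)) ^ σ := by rw [hr2]
        _ ≤ k * (w x) ^ σ := mul_le_mul_of_nonneg_left hr1 hk.le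
    linarith
  have hR2 : (0:ℝ) < R^2 := by positivity
  have hSnorm : ∀ y : E, S y = ‖y - z‖^2 := fun y => S_eq_norm z y
  have hΩopen : IsOpen {y : E | S y < R^2} := isOpen_lt hScont continuous_const
  have hwdiff : ∀ y : E, S y < R^2 → DifferentiableAt ℝ w y := by
    intro y hy
    rw [hwfun]
    exact (hasFDerivAt_w z (R^2) A q T hy).differentiableAt
  have hwd2 : ∀ x : E, S x < R^2 → ∀ i : Fin m,
      DifferentiableAt ℝ (fun y => fderiv ℝ w y (EuclideanSpace.single i 1)) x := by
    intro x hx i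
    have hev : (fun y => fderiv ℝ w y (EuclideanSpace.single i 1)) =ᶠ[nhds x]
        (fun y => (A * q * (R^2 - ∑ j, (y j - z j)^2) ^ (-q - 1)) * (2 * (y i - z i))) := by
      filter_upwards [hΩopen.mem_nhds hx] with y hy
      rw [hwfun]
      exact fderiv_w_apply z (R^2) A q T hy i
    rw [hev.differentiableAt_iff]
    exact (hasFDerivAt_Wi z (R^2) A q hx i).differentiableAt
  have key : u z ≤ w z := by
    by_contra hcon
    push_neg at hcon
    obtain ⟨xM, hxM, hxMmax⟩ := (isCompact_closedBall z R).exists_isMaxOn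
      ⟨z, Metric.mem_closedBall_self hR.le⟩ hu.continuous.continuousOn
    set M : ℝ := u xM with hMdef
    have hM : ∀ y ∈ Metric.closedBall z R, u y ≤ M := fun y hy => hxMmax hy
    set M' : ℝ := max (M - T) 0 + 1 with hM'def
    have hM' : 0 < M' := by positivity
    set δ : ℝ := min (R^2/2) ((A/M') ^ (1/q)) with hδdef
    have hδpos : 0 < δ := lt_min (by positivity) (Real.rpow_pos_of_pos (by positivity) _)
    have hδR : δ < R^2 := lt_of_le_of_lt (min_le_left _ _) (by linarith)
    have hδbig : M < T + A * δ^(-q) := by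
      have hd1 : δ ≤ (A/M') ^ (1/q) := min_le_right _ _
      have h1 : δ ^ q ≤ A / M' := by
        calc δ ^ q ≤ ((A/M') ^ (1/q)) ^ q := Real.rpow_le_rpow hδpos.le hd1 hq.le
          _ = A / M' := by
            rw [← Real.rpow_mul (by positivity), one_div, inv_mul_cancel₀ hq.ne',
              Real.rpow_one]
      have hδq : 0 < δ ^ q := Real.rpow_pos_of_pos hδpos _
      have h2 : M' ≤ A / δ ^ q := by
        rw [le_div_iff₀ hδq]
        calc M' * δ ^ q ≤ M' * (A / M') := mul_le_mul_of_nonneg_left h1 hM'.le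
          _ = A := by field_simp
      have h3 : A * δ ^ (-q) = A / δ ^ q := by
        rw [Real.rpow_neg hδpos.le, div_eq_mul_inv]
      have h4 : M - T < M' := by
        rw [hM'def]
        have h5 : M - T ≤ max (M - T) 0 := le_max_left _ _
        linarith
      rw [h3]
      linarith
    set K : Set E := {y | S y ≤ R^2 - δ} with hKdef
    have hKy : ∀ y ∈ K, S y < R^2 := fun y hy => lt_of_le_of_lt hy (by linarith)
    have hKcl : IsClosed K := isClosed_le hScont continuous_const
    have hKsub : K ⊆ Metric.closedBall z R := by
      intro y hy
      have h1 : S y ≤ R^2 := le_of_lt (hKy y hy)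
      rw [Metric.mem_closedBall, dist_eq_norm]
      by_contra hcc
      push_neg at hcc
      have h2 : R^2 < ‖y - z‖^2 := by nlinarith [norm_nonneg (y - z)]
      rw [← hSnorm y] at h2
      linarith
    have hKcomp : IsCompact K :=
      (isCompact_closedBall z R).of_isClosed_subset hKcl hKsub
    have hzK : z ∈ K := by
      have : S z ≤ R^2 - δ := by rw [hSz]; linarith
      exact this
    have hcontOn : ContinuousOn (fun y => u y - w y) K := fun y hy =>
      ((hu.continuous.continuousAt).sub (hwdiff y (hKy y hy)).continuousAt).continuousWithinAt
    obtain ⟨x₀, hx₀K, hx₀max'⟩ := hKcomp.exists_isMaxOn ⟨z, hzK⟩ hcontOn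
    have hx₀max : ∀ y ∈ K, u y - w y ≤ u x₀ - w x₀ := fun y hy => hx₀max' hy
    have hx₀R : S x₀ < R^2 := hKy x₀ hx₀K
    have hgz : 0 < u z - w z := by linarith
    have hx₀pos : 0 < u x₀ - w x₀ := lt_of_lt_of_le hgz (hx₀max z hzK)
    have hx₀K' : S x₀ ≤ R^2 - δ := hx₀K
    have hint : S x₀ < R^2 - δ := by
      rcases lt_or_eq_of_le hx₀K' with h | h
      · exact h
      · exfalso
        have hwx₀ : w x₀ = T + A * δ^(-q) := by
          rw [hwdef]
          dsimp only
          rw [show R^2 - S x₀ = δ from by rw [h]; ring]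
        have hux₀ : u x₀ ≤ M := hM x₀ (hKsub hx₀K)
        linarith
    have hmax : IsLocalMax (fun y => u y - w y) x₀ := by
      have hU : IsOpen {y : E | S y < R^2 - δ} := isOpen_lt hScont continuous_const
      filter_upwards [hU.mem_nhds hint] with y hy
      exact hx₀max y (le_of_lt hy)
    have hwev : ∀ᶠ y in nhds x₀, DifferentiableAt ℝ w y := by
      filter_upwards [hΩopen.mem_nhds hx₀R] with y hy using hwdiff y hy
    have hcomp : euclideanLaplacian u x₀ ≤ euclideanLaplacian w x₀ :=
      laplacian_le_at_localMax hu hwev (fun i => hwd2 x₀ hx₀R i) hmax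
    have hball : ‖x₀ - z‖ < R := by
      have h2 : ‖x₀ - z‖^2 < R^2 := by rw [← hSnorm x₀]; exact hx₀R
      nlinarith [norm_nonneg (x₀ - z)]
    have hwTx := hwT x₀ hx₀R
    have huTx : T ≤ u x₀ := by linarith
    have h1 := hineq x₀ hball huTx
    have h2 := hΔw x₀ hx₀R
    have h3 : (w x₀) ^ σ < (u x₀) ^ σ :=
      Real.rpow_lt_rpow (hw0 x₀ hx₀R).le (by linarith) hσ0
    have h4 : k * (w x₀) ^ σ < k * (u x₀) ^ σ := mul_lt_mul_of_pos_left h3 hk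
    linarith
  have hwz : w z = T + A * (R^2 : ℝ) ^ (-q) := by
    rw [hwdef]
    dsimp only
    rw [hSz, sub_zero]
  have hfin : A * (R^2 : ℝ) ^ (-q) = (C / (k * R^2)) ^ (1/(σ-1)) := by
    have h1 : ((R^2 : ℝ)) ^ (-q) = ((R^2 : ℝ) ^ (-2 : ℝ)) ^ (1/(σ-1)) := by
      rw [← Real.rpow_mul hR2.le]
      congr 1
      rw [hqdef]; ring
    rw [hAdef, h1, ← Real.mul_rpow (by positivity) (by positivity)]
    congr 1
    rw [show (-2 : ℝ) = -((2:ℕ):ℝ) by norm_num, Real.rpow_neg hR2.le, Real.rpow_natCast]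
    field_simp
  rw [hwz, hfin] at key
  exact key

theorem stmt8 {m : ℕ} (hm : 2 ≤ m) (σ H : ℝ) (hσ : 1 < σ) (hH : 0 < H)
    (Q : ℝ → ℝ)
    (hQpos : ∀ t > (0:ℝ), 0 < Q t)
    (hQmono : ∀ s t : ℝ, 0 < s → s ≤ t → Q s ≤ Q t)
    (hQo : Q =o[atTop] fun t => t ^ 2)
    (hliminf : ∃ C : ℝ, ∃ᶠ r in atTop, Q r * Real.log r / r ^ 2 ≤ C)
    (a b : EuclideanSpace ℝ (Fin m) → ℝ) (ha : Continuous a) (hb : Continuous b)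
    (hbQ : ∀ x : EuclideanSpace ℝ (Fin m), 0 < ‖x‖ → 1 / Q ‖x‖ ≤ b x)
    (haminus : ∃ C : ℝ, ∀ x, max (-a x) 0 ≤ C)
    (haH : ∀ x, max (-a x) 0 / b x ≤ H)
    (f : ℝ → ℝ) (hf : Continuous f)
    (hfliminf : ∃ c > (0:ℝ), ∀ᶠ t in atTop, c ≤ f t / t ^ σ)
    (u : EuclideanSpace ℝ (Fin m) → ℝ) (hu : ContDiff ℝ 2 u)
    (hupos : ∀ x, 0 ≤ u x)
    (hineq : ∀ x, b x * f (u x) + a x * u x ≤ euclideanLaplacian u x) :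
    BddAbove (Set.range u) := by
  have hσ1 : 0 < σ - 1 := by linarith
  have hσ0 : 0 < σ := by linarith
  obtain ⟨c, hc, hev⟩ := hfliminf
  rw [eventually_atTop] at hev
  obtain ⟨t₀, ht₀⟩ := hev
  set t₁ : ℝ := max t₀ 0 with ht₁def
  have ht₁0 : 0 ≤ t₁ := le_max_right _ _
  -- lower bound for f on [0, t₁]
  obtain ⟨K₀, hK₀nn, hK₀⟩ : ∃ K₀, 0 ≤ K₀ ∧ ∀ t ∈ Set.Icc (0:ℝ) t₁, -K₀ ≤ f t := by
    obtain ⟨p, hp, hmin⟩ := (isCompact_Icc (a := (0:ℝ)) (b := t₁)).exists_isMinOn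
      ⟨0, by simp [ht₁0]⟩ hf.continuousOn
    refine ⟨max (-(f p)) 0, le_max_right _ _, fun t ht => ?_⟩
    have h1 : f p ≤ f t := hmin ht
    have h2 : -(max (-(f p)) 0) ≤ -(-(f p)) := neg_le_neg (le_max_left _ _)
    simp only [neg_neg] at h2
    linarith
  set K : ℝ := K₀ + c * t₁ ^ σ with hKdef
  have hKnn : 0 ≤ K := by
    have := Real.rpow_nonneg ht₁0 σ
    nlinarith
  have hflb : ∀ t : ℝ, 0 ≤ t → c * t ^ σ - K ≤ f t := by
    intro t ht
    rcases le_or_gt t t₁ with h | h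
    · have h1 : -K₀ ≤ f t := hK₀ t ⟨ht, h⟩
      have h2 : t ^ σ ≤ t₁ ^ σ := Real.rpow_le_rpow ht h hσ0.le
      have h3 : c * t ^ σ ≤ c * t₁ ^ σ := mul_le_mul_of_nonneg_left h2 hc.le
      rw [hKdef]
      linarith
    · have ht' : t₀ ≤ t := le_trans (le_max_left _ _) h.le
      have htpos : 0 < t := lt_of_le_of_lt ht₁0 h
      have h2 : 0 < t ^ σ := Real.rpow_pos_of_pos htpos σ
      have h3 : c * t ^ σ ≤ f t := by
        have h1 : c ≤ f t / t ^ σ := ht₀ t ht'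
        rw [le_div_iff₀ h2] at h1
        linarith
      linarith
  -- choose the threshold T
  set T : ℝ := max 1 (max ((4*H/c) ^ (1/(σ-1))) ((4*K/c) ^ (1/σ))) with hTdef
  have hT1 : 1 ≤ T := le_max_left _ _
  have hT0 : 0 ≤ T := by linarith
  have hTprop : ∀ t : ℝ, T ≤ t → H * t ≤ (c/4) * t ^ σ ∧ K ≤ (c/4) * t ^ σ := by
    intro t ht
    have ht1 : 1 ≤ t := le_trans hT1 ht
    have ht0 : 0 < t := by linarith
    constructor
    · have hTH : (4*H/c) ^ (1/(σ-1)) ≤ t :=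
        le_trans (le_trans (le_max_left _ _) (le_max_right _ _)) ht
      have h1 : 4*H/c ≤ t ^ (σ-1) := by
        have h2 : ((4*H/c) ^ (1/(σ-1))) ^ (σ-1) ≤ t ^ (σ-1) :=
          Real.rpow_le_rpow (Real.rpow_nonneg (by positivity) _) hTH hσ1.le
        rwa [← Real.rpow_mul (by positivity), one_div, inv_mul_cancel₀ hσ1.ne',
          Real.rpow_one] at h2
      have h3 : t ^ σ = t ^ (σ-1) * t := by
        rw [← Real.rpow_add_one ht0.ne']
        congr 1; ring
      have h4 : (4*H/c) * t ≤ t ^ (σ-1) * t := mul_le_mul_of_nonneg_right h1 ht0.le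
      rw [h3]
      calc H * t = (c/4) * ((4*H/c) * t) := by field_simp
        _ ≤ (c/4) * (t ^ (σ-1) * t) := mul_le_mul_of_nonneg_left h4 (by positivity)
    · have hTK : (4*K/c) ^ (1/σ) ≤ t :=
        le_trans (le_trans (le_max_right _ _) (le_max_right _ _)) ht
      have h1 : 4*K/c ≤ t ^ σ := by
        have h2 : ((4*K/c) ^ (1/σ)) ^ σ ≤ t ^ σ :=
          Real.rpow_le_rpow (Real.rpow_nonneg (by positivity) _) hTK hσ0.le
        rwa [← Real.rpow_mul (by positivity), one_div, inv_mul_cancel₀ hσ0.ne',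
          Real.rpow_one] at h2
      calc K = (c/4) * (4*K/c) := by field_simp
        _ ≤ (c/4) * t ^ σ := mul_le_mul_of_nonneg_left h1 (by positivity)
  -- the pointwise exterior estimate
  have hmain : ∀ x : EuclideanSpace ℝ (Fin m), 1 ≤ ‖x‖ →
      u x ≤ T + ((2/(σ-1)) * (2*m + 4*(2/(σ-1)) + 4) /
        (((c/2) / Q ((3/2) * ‖x‖)) * (‖x‖/2)^2)) ^ (1/(σ-1)) := by
    intro x hx
    have hxpos : 0 < ‖x‖ := by linarith
    have hQx : 0 < Q ((3/2) * ‖x‖) := hQpos _ (by linarith)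
    have hk : 0 < (c/2) / Q ((3/2) * ‖x‖) := by positivity
    have hRpos : 0 < ‖x‖/2 := by linarith
    apply local_estimate hσ hk hRpos hT0 hu x
    intro y hy hTy
    have hyn1 : ‖x‖/2 < ‖y‖ := by
      have h1 : ‖x‖ - ‖y‖ ≤ ‖x - y‖ := norm_sub_norm_le x y
      have h2 : ‖x - y‖ = ‖y - x‖ := norm_sub_rev x y
      linarith
    have hyn0 : 0 < ‖y‖ := by linarith
    have hyn2 : ‖y‖ ≤ (3/2) * ‖x‖ := by
      have h1 : ‖y‖ - ‖x‖ ≤ ‖y - x‖ := norm_sub_norm_le y x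
      linarith
    have hby : 1 / Q ‖y‖ ≤ b y := hbQ y hyn0
    have hQy : 0 < Q ‖y‖ := hQpos _ hyn0
    have hQle : Q ‖y‖ ≤ Q ((3/2) * ‖x‖) := hQmono _ _ hyn0 hyn2
    have hbypos : 0 < b y := lt_of_lt_of_le (by positivity) hby
    have hay : -(H * b y) ≤ a y := by
      have h1 := haH y
      rw [div_le_iff₀ hbypos] at h1
      have h2 : -(a y) ≤ max (-(a y)) 0 := le_max_left _ _
      linarith
    have hfy : c * (u y) ^ σ - K ≤ f (u y) := hflb _ (hupos y)
    obtain ⟨hH1, hK1⟩ := hTprop (u y) hTy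
    have huσ : 0 ≤ (u y) ^ σ := Real.rpow_nonneg (hupos y) σ
    -- chain of inequalities
    have step1 : (c/2) * (u y) ^ σ ≤ f (u y) - H * (u y) := by linarith
    have step2 : b y * ((c/2) * (u y) ^ σ) ≤ b y * (f (u y) - H * (u y)) :=
      mul_le_mul_of_nonneg_left step1 hbypos.le
    have step3 : b y * (f (u y) - H * (u y)) ≤ b y * f (u y) + a y * u y := by
      have h1 : -(H * b y) * u y ≤ a y * u y :=
        mul_le_mul_of_nonneg_right hay (hupos y)
      nlinarith [hupos y]
    have step4 : ((c/2) / Q ((3/2) * ‖x‖)) * (u y) ^ σ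
        ≤ b y * ((c/2) * (u y) ^ σ) := by
      have h1 : (c/2) / Q ((3/2) * ‖x‖) ≤ (c/2) / Q ‖y‖ :=
        div_le_div_of_nonneg_left (by linarith) hQy hQle
      have h2 : (c/2) / Q ‖y‖ * (u y) ^ σ ≤ (1 / Q ‖y‖) * ((c/2) * (u y) ^ σ) := by
        rw [div_eq_mul_inv, one_div]
        nlinarith [mul_nonneg (inv_nonneg.mpr hQy.le) huσ]
      have h3 : (1 / Q ‖y‖) * ((c/2) * (u y) ^ σ) ≤ b y * ((c/2) * (u y) ^ σ) :=
        mul_le_mul_of_nonneg_right hby (by positivity)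
      calc ((c/2) / Q ((3/2) * ‖x‖)) * (u y) ^ σ
          ≤ (c/2) / Q ‖y‖ * (u y) ^ σ := mul_le_mul_of_nonneg_right h1 huσ
        _ ≤ (1 / Q ‖y‖) * ((c/2) * (u y) ^ σ) := h2
        _ ≤ b y * ((c/2) * (u y) ^ σ) := h3
    calc ((c/2) / Q ((3/2) * ‖x‖)) * (u y) ^ σ
        ≤ b y * ((c/2) * (u y) ^ σ) := step4
      _ ≤ b y * (f (u y) - H * (u y)) := step2
      _ ≤ b y * f (u y) + a y * u y := step3
      _ ≤ euclideanLaplacian u y := hineq y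
  -- limit: Q((3/2) r)/r^2 tends to 0
  have htQ : Tendsto (fun t : ℝ => Q t / t ^ 2) atTop (nhds 0) := by
    rw [isLittleO_iff_tendsto'] at hQo
    · exact hQo
    · filter_upwards [eventually_gt_atTop 0] with t ht h
      exact absurd h (by positivity)
  have h32 : Tendsto (fun t : ℝ => (3/2) * t) atTop atTop :=
    Filter.Tendsto.const_mul_atTop (show (0:ℝ) < 3/2 by norm_num) tendsto_id
  have htQ2 : Tendsto (fun t : ℝ => Q ((3/2) * t) / ((3/2) * t) ^ 2) atTop (nhds 0) := by
    have h0 := htQ.comp h32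
    exact h0
  have htQ3 : Tendsto (fun t : ℝ => Q ((3/2) * t) / t ^ 2) atTop (nhds 0) := by
    have heq : (fun t : ℝ => (9/4) * (Q ((3/2) * t) / ((3/2) * t) ^ 2)) =ᶠ[atTop]
        (fun t : ℝ => Q ((3/2) * t) / t ^ 2) := by
      filter_upwards [eventually_gt_atTop 0] with t ht
      have h9 : ((3/2) * t) ^ 2 = (9/4) * t^2 := by ring
      rw [h9]
      field_simp
    have h0 := htQ2.const_mul (9/4 : ℝ)
    rw [mul_zero] at h0
    exact h0.congr' heq
  set C0 : ℝ := (2/(σ-1)) * (2*(m:ℝ) + 4*(2/(σ-1)) + 4) with hC0def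
  have hq0 : (0:ℝ) < 2/(σ-1) := by positivity
  have hC0 : 0 < C0 := by
    have hm0 : (0:ℝ) ≤ 2*(m:ℝ) := by positivity
    rw [hC0def]
    nlinarith
  have hfinal : Tendsto (fun t : ℝ => (8*C0/c) * (Q ((3/2) * t) / t ^ 2)) atTop (nhds 0) := by
    have h0 := htQ3.const_mul (8*C0/c)
    rwa [mul_zero] at h0
  have hsmall : ∀ᶠ t : ℝ in atTop, (8*C0/c) * (Q ((3/2) * t) / t ^ 2) ≤ 1 :=
    hfinal.eventually (eventually_le_nhds (by norm_num : (0:ℝ) < 1))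
  rw [eventually_atTop] at hsmall
  obtain ⟨r₁, hr₁⟩ := hsmall
  set r₂ : ℝ := max r₁ 1 with hr₂def
  have hr₂1 : (1:ℝ) ≤ r₂ := le_max_right _ _
  -- exterior bound
  have hext : ∀ x : EuclideanSpace ℝ (Fin m), r₂ ≤ ‖x‖ → u x ≤ T + 1 := by
    intro x hx
    have hx1 : 1 ≤ ‖x‖ := le_trans hr₂1 hx
    have hxpos : 0 < ‖x‖ := by linarith
    have hQx : 0 < Q ((3/2) * ‖x‖) := hQpos _ (by linarith)
    have hbound := hmain x hx1
    have halg : C0 / (((c/2) / Q ((3/2) * ‖x‖)) * (‖x‖/2)^2)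
        = (8*C0/c) * (Q ((3/2) * ‖x‖) / ‖x‖ ^ 2) := by
      field_simp
      ring
    have hle1 : C0 / (((c/2) / Q ((3/2) * ‖x‖)) * (‖x‖/2)^2) ≤ 1 := by
      rw [halg]
      exact hr₁ ‖x‖ (le_trans (le_max_left _ _) hx)
    have hdenpos : 0 < ((c/2) / Q ((3/2) * ‖x‖)) * (‖x‖/2)^2 := by positivity
    have hpow : (C0 / (((c/2) / Q ((3/2) * ‖x‖)) * (‖x‖/2)^2)) ^ (1/(σ-1)) ≤ 1 :=
      Real.rpow_le_one (by positivity) hle1 (by positivity)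
    calc u x ≤ T + (C0 / (((c/2) / Q ((3/2) * ‖x‖)) * (‖x‖/2)^2)) ^ (1/(σ-1)) := hbound
      _ ≤ T + 1 := by linarith
  -- interior bound and conclusion
  obtain ⟨xB, hxB, hxBmax⟩ := (isCompact_closedBall (0 : EuclideanSpace ℝ (Fin m)) r₂).exists_isMaxOn
    ⟨0, Metric.mem_closedBall_self (by linarith)⟩ hu.continuous.continuousOn
  refine ⟨max (u xB) (T+1), ?_⟩
  rintro v ⟨x, rfl⟩
  rcases le_or_gt ‖x‖ r₂ with h | h
  · have hmem : x ∈ Metric.closedBall (0 : EuclideanSpace ℝ (Fin m)) r₂ := by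
      rwa [Metric.mem_closedBall, dist_zero_right]
    exact le_trans (hxBmax hmem) (le_max_left _ _)
  · exact le_trans (hext x h.le) (le_max_right _ _)
end

section
/- Let m ≥ 2, let Q : (0,∞) → ℝ be a positive non-decreasing function with Q(t) = o(t²) as t → +∞ and liminf_{r→+∞} Q(r)·(log r)/r² < +∞. Let b : ℝ^m → ℝ be continuous with b(x) ≥ 1/Q(|x|) for |x| > 0, let Γ ∈ ℝ, and let f : ℝ → ℝ be continuous with f(t) > 0 for all t ≥ Γ. Let Ω ⊆ ℝ^m be an unbounded open set with non-empty boundary ∂Ω. Suppose u : closure(Ω) → ℝ is continuous and bounded, is C² on Ω, satisfies Δu(x) ≥ b(x) f(u(x)) for all x ∈ Ω, and u(x) ≤ Γ for all x ∈ ∂Ω. Then u(x) ≤ Γ for all x ∈ Ω. -/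
open Filter Asymptotics

open Topology in
lemma secondDerivTest {ψ φ' : ℝ → ℝ} {a : ℝ}
    (h1 : ∀ᶠ t in 𝓝 (0:ℝ), HasDerivAt ψ (φ' t) t)
    (h2 : HasDerivAt φ' a 0)
    (hmax : IsLocalMax ψ 0) : a ≤ 0 := by
  by_contra h
  push_neg at h
  have h0 : φ' 0 = 0 := hmax.hasDerivAt_eq_zero h1.self_of_nhds
  have hslope : Tendsto (fun t => φ' t / t) (𝓝[≠] (0:ℝ)) (𝓝 a) := by
    have := hasDerivAt_iff_tendsto_slope.mp h2
    simpa [slope_fun_def, h0, div_eq_inv_mul] using this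
  have hpos : ∀ᶠ t in 𝓝[>] (0:ℝ), 0 < φ' t := by
    have h3 : ∀ᶠ t in 𝓝[≠] (0:ℝ), 0 < φ' t / t :=
      hslope.eventually (eventually_gt_nhds h)
    have h4 : ∀ᶠ t in 𝓝[>] (0:ℝ), 0 < φ' t / t :=
      h3.filter_mono (nhdsWithin_mono 0 (fun x hx => ne_of_gt hx))
    filter_upwards [h4, self_mem_nhdsWithin] with t ht ht'
    have htp : (0:ℝ) < t := ht'
    have := mul_pos ht htp
    rwa [div_mul_cancel₀ _ (ne_of_gt htp)] at this
  have hmem : ∀ᶠ t in 𝓝[>] (0:ℝ),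
      HasDerivAt ψ (φ' t) t ∧ ψ t ≤ ψ 0 ∧ 0 < φ' t := by
    filter_upwards [eventually_nhdsWithin_of_eventually_nhds h1,
      eventually_nhdsWithin_of_eventually_nhds hmax, hpos] with t a b c
    exact ⟨a, b, c⟩
  obtain ⟨δ, hδpos, hδ⟩ := mem_nhdsGT_iff_exists_Ioo_subset.mp hmem
  have hδ0 : (0:ℝ) < δ := hδpos
  set t₀ := δ/2 with ht₀def
  have ht₀ : t₀ ∈ Set.Ioo (0:ℝ) δ := ⟨by positivity, by simp [ht₀def]; linarith⟩
  have hcont : ContinuousOn ψ (Set.Icc 0 t₀) := by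
    intro s hs
    rcases eq_or_lt_of_le hs.1 with hs0 | hs0
    · rw [← hs0]
      exact (h1.self_of_nhds.continuousAt).continuousWithinAt
    · exact ((hδ ⟨hs0, lt_of_le_of_lt hs.2 ht₀.2⟩).1.continuousAt).continuousWithinAt
  have hderiv : ∀ s ∈ Set.Ioo (0:ℝ) t₀, HasDerivAt ψ (φ' s) s := fun s hs =>
    (hδ ⟨hs.1, lt_trans hs.2 ht₀.2⟩).1
  obtain ⟨ξ, hξ, hξeq⟩ := exists_hasDerivAt_eq_slope ψ φ' ht₀.1 hcont hderiv
  have hξpos : 0 < φ' ξ := (hδ ⟨hξ.1, lt_trans hξ.2 ht₀.2⟩).2.2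
  have hle : ψ t₀ ≤ ψ 0 := (hδ ht₀).2.1
  rw [hξeq] at hξpos
  have : (ψ t₀ - ψ 0) / (t₀ - 0) ≤ 0 := div_nonpos_of_nonpos_of_nonneg (by linarith) (by linarith [ht₀.1])
  linarith

open Topology in
lemma lapmax {m : ℕ} {u : EuclideanSpace ℝ (Fin m) → ℝ} {Ω : Set (EuclideanSpace ℝ (Fin m))}
    (hΩ : IsOpen Ω) (hu : ContDiffOn ℝ 2 u Ω) {x : EuclideanSpace ℝ (Fin m)} (hx : x ∈ Ω)
    {c : ℝ} (hmax : IsLocalMax (fun y => u y - c * ‖y‖^2) x) :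
    euclideanLaplacian u x ≤ 2*m*c := by
  have hterm : ∀ i : Fin m,
      fderiv ℝ (fun y => fderiv ℝ u y (EuclideanSpace.single i 1)) x (EuclideanSpace.single i 1)
        ≤ 2*c := by
    intro i
    set e := EuclideanSpace.single i (1:ℝ) with he_def
    have he : ‖e‖ = 1 := by simp [he_def]
    set L : ℝ → EuclideanSpace ℝ (Fin m) := fun t => x + t • e with hLdef
    have hL0 : L 0 = x := by simp [hLdef]
    have hLd : ∀ t, HasDerivAt L e t := by
      intro t
      have := ((hasDerivAt_id t).smul_const e).const_add x
      simp only [id, one_smul] at this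
      exact this
    have hLcont : Continuous L := continuous_const.add (continuous_id.smul continuous_const)
    have hLtend : Tendsto L (𝓝 0) (𝓝 x) := by
      have := hLcont.continuousAt (x := (0:ℝ))
      rwa [ContinuousAt, hL0] at this
    have hLΩ : ∀ᶠ t in 𝓝 (0:ℝ), L t ∈ Ω := hLtend.eventually (hΩ.eventually_mem hx)
    have hnorm : ∀ t:ℝ, ‖L t‖^2 = ‖x‖^2 + 2*(inner ℝ x e : ℝ)*t + t^2 := by
      intro t
      rw [hLdef]
      simp only
      rw [norm_add_sq_real, real_inner_smul_right, norm_smul, he]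
      simp [Real.norm_eq_abs, sq_abs, mul_pow]
      ring
    set ψ : ℝ → ℝ := fun t => u (L t) - c*(‖x‖^2 + 2*(inner ℝ x e:ℝ)*t + t^2) with hψdef
    set φ' : ℝ → ℝ := fun t => fderiv ℝ u (L t) e - c*(2*(inner ℝ x e:ℝ) + 2*t) with hφ'def
    have hψmax : IsLocalMax ψ 0 := by
      have h1 := hLtend.eventually hmax
      filter_upwards [h1] with t ht
      have e1 : ψ t = u (L t) - c*‖L t‖^2 := by rw [hψdef]; simp only; rw [hnorm t]
      have e2 : ψ 0 = u x - c*‖x‖^2 := by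
        rw [hψdef]; simp only; rw [hL0]; ring
      rw [e1, e2]; exact ht
    have hder1 : ∀ᶠ t in 𝓝 (0:ℝ), HasDerivAt ψ (φ' t) t := by
      filter_upwards [hLΩ] with t ht
      have hdu : DifferentiableAt ℝ u (L t) :=
        (hu.contDiffAt (hΩ.mem_nhds ht)).differentiableAt (by norm_num)
      have h1 : HasDerivAt (fun s => u (L s)) (fderiv ℝ u (L t) e) t :=
        hdu.hasFDerivAt.comp_hasDerivAt t (hLd t)
      have h2 : HasDerivAt (fun s:ℝ => c*(‖x‖^2 + 2*(inner ℝ x e:ℝ)*s + s^2))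
          (c*(2*(inner ℝ x e:ℝ) + 2*t)) t := by
        have hb' : HasDerivAt (fun s:ℝ => 2*(inner ℝ x e:ℝ)*s) (2*(inner ℝ x e:ℝ)) t := by
          simpa using (hasDerivAt_id t).const_mul (2*(inner ℝ x e:ℝ))
        have hc' : HasDerivAt (fun s:ℝ => s^2) (2*t) t := by
          simpa using hasDerivAt_pow 2 t
        have := ((hasDerivAt_const t (‖x‖^2)).add hb').add hc'
        simpa using this.const_mul c
      exact h1.sub h2
    have hder2 : HasDerivAt φ' (fderiv ℝ (fun y => fderiv ℝ u y e) x e - 2*c) 0 := by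
      have h2' : ContDiffAt ℝ 2 u x := hu.contDiffAt (hΩ.mem_nhds hx)
      have hF : DifferentiableAt ℝ (fun y => fderiv ℝ u y e) x := by
        have hcd : ContDiffAt ℝ 1 (fderiv ℝ u) x := h2'.fderiv_right (by norm_num)
        exact (hcd.differentiableAt (by norm_num)).clm_apply (differentiableAt_const e)
      have h1 : HasDerivAt (fun t => fderiv ℝ u (L t) e)
          (fderiv ℝ (fun y => fderiv ℝ u y e) x e) 0 := by
        have hF' : HasFDerivAt (fun y => fderiv ℝ u y e)
            (fderiv ℝ (fun y => fderiv ℝ u y e) x) (L 0) := hL0 ▸ hF.hasFDerivAt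
        have := hF'.comp_hasDerivAt 0 (hLd 0)
        exact this
      have h2 : HasDerivAt (fun t:ℝ => c*(2*(inner ℝ x e:ℝ) + 2*t)) (2*c) 0 := by
        have hlin : HasDerivAt (fun t:ℝ => 2*(inner ℝ x e:ℝ) + 2*t) 2 0 := by
          have := (hasDerivAt_const (0:ℝ) (2*(inner ℝ x e:ℝ))).add
            ((hasDerivAt_id (0:ℝ)).const_mul 2)
          simp only [id, mul_one, zero_add] at this
          exact this
        have := hlin.const_mul c
        simpa [mul_comm] using this
      exact h1.sub h2
    have := secondDerivTest hder1 hder2 hψmax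
    linarith
  calc euclideanLaplacian u x
      ≤ ∑ _i : Fin m, 2*c := Finset.sum_le_sum (fun i _ => hterm i)
    _ = m*(2*c) := by simp [Finset.sum_const, Finset.card_univ, nsmul_eq_mul]
    _ = 2*m*c := by ring

open Topology in
set_option maxHeartbeats 1000000 in
theorem stmt9 {m : ℕ} (hm : 2 ≤ m)
    (Q : ℝ → ℝ)
    (hQpos : ∀ t > (0:ℝ), 0 < Q t)
    (hQmono : ∀ s t : ℝ, 0 < s → s ≤ t → Q s ≤ Q t)
    (hQo : Q =o[atTop] fun t => t ^ 2)
    (hliminf : ∃ C : ℝ, ∃ᶠ r in atTop, Q r * Real.log r / r ^ 2 ≤ C)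
    (b : EuclideanSpace ℝ (Fin m) → ℝ) (hb : Continuous b)
    (hbQ : ∀ x : EuclideanSpace ℝ (Fin m), 0 < ‖x‖ → 1 / Q ‖x‖ ≤ b x)
    (Γ : ℝ) (f : ℝ → ℝ) (hf : Continuous f) (hfpos : ∀ t ≥ Γ, 0 < f t)
    (Ω : Set (EuclideanSpace ℝ (Fin m))) (hΩopen : IsOpen Ω)
    (hΩunbounded : ¬ Bornology.IsBounded Ω)
    (hΩbdry : (frontier Ω).Nonempty)
    (u : EuclideanSpace ℝ (Fin m) → ℝ)
    (hucont : ContinuousOn u (closure Ω))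
    (hubdd : ∃ C : ℝ, ∀ x ∈ closure Ω, |u x| ≤ C)
    (huC2 : ContDiffOn ℝ 2 u Ω)
    (hineq : ∀ x ∈ Ω, b x * f (u x) ≤ euclideanLaplacian u x)
    (hbc : ∀ x ∈ frontier Ω, u x ≤ Γ) :
    ∀ x ∈ Ω, u x ≤ Γ := by
  by_contra hcon
  push_neg at hcon
  obtain ⟨x₀, hx₀Ω, hx₀⟩ := hcon
  obtain ⟨C', hC'⟩ := hubdd
  set θ : ℝ := (Γ + u x₀)/2 with hθdef
  have hθΓ : Γ < θ := by rw [hθdef]; linarith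
  have hθx₀ : θ < u x₀ := by rw [hθdef]; linarith
  have hx₀cl : x₀ ∈ closure Ω := subset_closure hx₀Ω
  have hx₀C' : u x₀ ≤ C' := (le_abs_self _).trans (hC' x₀ hx₀cl)
  -- supremum M
  have hbdd : BddAbove (u '' closure Ω) := by
    refine ⟨C', ?_⟩
    rintro _ ⟨y, hy, rfl⟩
    exact (le_abs_self _).trans (hC' y hy)
  set M := sSup (u '' closure Ω) with hMdef
  have huleM : ∀ y ∈ closure Ω, u y ≤ M := fun y hy => le_csSup hbdd ⟨y, hy, rfl⟩
  have hMθ : θ < M := lt_of_lt_of_le hθx₀ (huleM x₀ hx₀cl)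
  -- ε : min of f on [θ, C']
  obtain ⟨t₀, ht₀K, ht₀min⟩ := isCompact_Icc.exists_isMinOn
    (⟨u x₀, hθx₀.le, hx₀C'⟩ : (Set.Icc θ C').Nonempty) hf.continuousOn
  set ε := f t₀ with hεdef
  have hεpos : 0 < ε := hfpos t₀ (le_trans hθΓ.le ht₀K.1)
  have hεle : ∀ s ∈ Set.Icc θ C', ε ≤ f s := fun s hs => ht₀min hs
  set A : ℝ := 2*(m:ℝ)*(M - θ) with hAdef
  have hm' : (2:ℝ) ≤ (m:ℝ) := by exact_mod_cast hm
  have hApos : 0 < A := by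
    rw [hAdef]
    have : (0:ℝ) < (m:ℝ) := by linarith
    nlinarith
  -- key estimate for large R
  have key : ∀ᶠ R in atTop, u x₀ ≤ θ + (M-θ)*‖x₀‖^2/R^2 := by
    have hev1 : ∀ᶠ R in atTop, Q R ≤ (ε/(2*A)) * R^2 := by
      have hδ : (0:ℝ) < ε/(2*A) := by positivity
      filter_upwards [isLittleO_iff.mp hQo hδ, eventually_ge_atTop (1:ℝ)] with R hle hR
      have hQR : 0 < Q R := hQpos R (by linarith)
      calc Q R ≤ |Q R| := le_abs_self _
        _ ≤ (ε/(2*A)) * |R^2| := by simpa [Real.norm_eq_abs] using hle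
        _ = (ε/(2*A)) * R^2 := by rw [abs_of_nonneg (by positivity)]
    filter_upwards [hev1, eventually_gt_atTop (max ‖x₀‖ 1)] with R hQR' hRbig
    have hRx : ‖x₀‖ < R := lt_of_le_of_lt (le_max_left _ _) hRbig
    have hR1 : (1:ℝ) < R := lt_of_le_of_lt (le_max_right _ _) hRbig
    have hR0 : (0:ℝ) < R := by linarith
    have hR20 : (0:ℝ) < R^2 := by positivity
    have hQRpos : 0 < Q R := hQpos R hR0
    have hQA : Q R * A < ε * R^2 := by
      have h1 : Q R * A ≤ (ε/(2*A)) * R^2 * A := by nlinarith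
      have h2 : (ε/(2*A)) * R^2 * A = ε/2 * R^2 := by field_simp
      nlinarith
    set c : ℝ := (M - θ)/R^2 with hcdef
    have hcpos : 0 < c := by rw [hcdef]; exact div_pos (by linarith) hR20
    -- lower bound for b on the ball
    have hblower : ∀ x : EuclideanSpace ℝ (Fin m), ‖x‖ ≤ R → 1/Q R ≤ b x := by
      intro x hx
      rcases (norm_nonneg x).eq_or_lt with h0 | h0
      · have hx0 : x = 0 := norm_eq_zero.mp h0.symm
        subst hx0
        have hmpos : 0 < m := by omega
        set v := EuclideanSpace.single (⟨0, hmpos⟩ : Fin m) (1:ℝ) with hvdef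
        have hv : ‖v‖ = 1 := by simp [hvdef]
        have htend : Tendsto (fun t:ℝ => b (t • v)) (𝓝[>] 0) (𝓝 (b 0)) := by
          have h1 : Tendsto (fun t:ℝ => t • v) (𝓝 0) (𝓝 ((0:ℝ) • v)) :=
            (continuous_id.smul continuous_const).tendsto 0
          have h2 : Tendsto (fun t:ℝ => t • v) (𝓝[>] 0) (𝓝 (0:EuclideanSpace ℝ (Fin m))) := by
            simpa [zero_smul] using h1.mono_left nhdsWithin_le_nhds
          exact (hb.tendsto 0).comp h2
        refine ge_of_tendsto htend ?_
        filter_upwards [Ioo_mem_nhdsGT_of_mem (Set.mem_Ico.mpr ⟨le_refl (0:ℝ), hR0⟩)] with t ht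
        have htpos : 0 < t := ht.1
        have hnv : ‖t • v‖ = t := by
          rw [norm_smul, hv, Real.norm_eq_abs, abs_of_pos htpos, mul_one]
        have h1 : 1/Q R ≤ 1/Q t :=
          one_div_le_one_div_of_le (hQpos t htpos) (hQmono t R htpos ht.2.le)
        have h2 : 1/Q ‖t • v‖ ≤ b (t • v) := hbQ _ (by rw [hnv]; exact htpos)
        rw [hnv] at h2
        exact h1.trans h2
      · exact (one_div_le_one_div_of_le (hQpos _ h0) (hQmono _ _ h0 hx)).trans (hbQ x h0)
    -- the bounded domain D
    set D : Set (EuclideanSpace ℝ (Fin m)) :=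
      (Ω ∩ u ⁻¹' Set.Ioi θ) ∩ Metric.ball 0 R with hDdef
    have hucontΩ : ContinuousOn u Ω := hucont.mono subset_closure
    have hDopen : IsOpen D :=
      (hucontΩ.isOpen_inter_preimage hΩopen isOpen_Ioi).inter Metric.isOpen_ball
    have hDsub : D ⊆ Ω := fun x hx => hx.1.1
    have hx₀D : x₀ ∈ D := ⟨⟨hx₀Ω, hθx₀⟩, by simpa [mem_ball_zero_iff] using hRx⟩
    have hclsub : closure D ⊆ closure Ω := closure_mono hDsub
    have hclball : closure D ⊆ Metric.closedBall 0 R :=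
      (closure_mono Set.inter_subset_right).trans Metric.closure_ball_subset_closedBall
    set w : EuclideanSpace ℝ (Fin m) → ℝ := fun x => u x - c*‖x‖^2 with hwdef
    have hwcont : ContinuousOn w (closure D) :=
      (hucont.mono hclsub).sub ((continuous_const.mul (continuous_norm.pow 2)).continuousOn)
    have hcomp : IsCompact (closure D) := by
      refine Metric.isCompact_of_isClosed_isBounded isClosed_closure ?_
      exact (Metric.isBounded_ball.subset Set.inter_subset_right).closure
    obtain ⟨z, hzcl, hzmax⟩ := hcomp.exists_isMaxOn ⟨x₀, subset_closure hx₀D⟩ hwcont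
    have hwθ : w z ≤ θ := by
      by_cases hzD : z ∈ D
      · exfalso
        have hloc : IsLocalMax w z :=
          hzmax.isLocalMax (Filter.mem_of_superset (hDopen.mem_nhds hzD) subset_closure)
        have hlap : euclideanLaplacian u z ≤ 2*m*c := lapmax hΩopen huC2 (hDsub hzD) hloc
        have hzR : ‖z‖ ≤ R := by
          have := hzD.2
          rw [mem_ball_zero_iff] at this
          linarith
        have hbz : 1/Q R ≤ b z := hblower z hzR
        have hbznn : 0 ≤ b z := le_trans (by positivity) hbz
        have hfu : ε ≤ f (u z) := by
          refine hεle _ ⟨le_of_lt hzD.1.2, (le_abs_self _).trans (hC' z (hclsub hzcl))⟩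
        have hstep : ε/Q R ≤ euclideanLaplacian u z := by
          have h1 : ε/Q R = (1/Q R)*ε := by ring
          have h2 : (1/Q R)*ε ≤ b z * f (u z) := mul_le_mul hbz hfu hεpos.le hbznn
          rw [h1]
          exact h2.trans (hineq z (hDsub hzD))
        have hlt : 2*(m:ℝ)*c < ε/Q R := by
          have hc2 : 2*(m:ℝ)*c = A/R^2 := by rw [hcdef, hAdef]; field_simp
          rw [hc2, div_lt_div_iff₀ hR20 hQRpos]
          nlinarith
        linarith
      · by_cases huz : u z ≤ θ
        · have h1 : 0 ≤ c*‖z‖^2 := by positivity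
          rw [hwdef]; simp only; linarith
        · push_neg at huz
          have hzΩ : z ∈ Ω := by
            by_contra hzn
            have hfr : z ∈ frontier Ω := by
              rw [hΩopen.frontier_eq]
              exact ⟨hclsub hzcl, hzn⟩
            linarith [hbc z hfr]
          have hzR : ‖z‖ ≤ R := by
            have := hclball hzcl
            rwa [Metric.mem_closedBall, dist_zero_right] at this
          have hzeq : ‖z‖ = R := by
            rcases hzR.lt_or_eq with hlt | heq
            · exact absurd ⟨⟨hzΩ, huz⟩, mem_ball_zero_iff.mpr hlt⟩ hzD
            · exact heq
          have hcz : c*‖z‖^2 = M - θ := by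
            rw [hzeq, hcdef]
            field_simp
          have hzM : u z ≤ M := huleM z (hclsub hzcl)
          rw [hwdef]; simp only; linarith
    have hwx₀ : u x₀ - c*‖x₀‖^2 ≤ θ := le_trans (hzmax (subset_closure hx₀D)) hwθ
    have hceq : c*‖x₀‖^2 = (M-θ)*‖x₀‖^2/R^2 := by rw [hcdef]; ring
    linarith
  -- pass to the limit R → ∞
  have hlim : Tendsto (fun R:ℝ => θ + (M-θ)*‖x₀‖^2/R^2) atTop (𝓝 θ) := by
    have h0 : Tendsto (fun R:ℝ => (M-θ)*‖x₀‖^2/R^2) atTop (𝓝 0) := by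
      have h1 : Tendsto (fun R:ℝ => (R^2)⁻¹) atTop (𝓝 0) :=
        tendsto_inv_atTop_zero.comp (tendsto_pow_atTop (by norm_num : 2 ≠ 0))
      have := h1.const_mul ((M-θ)*‖x₀‖^2)
      simpa [div_eq_mul_inv] using this
    simpa using tendsto_const_nhds.add h0
  have hfin : u x₀ ≤ θ := ge_of_tendsto hlim key
  linarith
end

section
/- Let m ≥ 2, σ > 1, H > 0, p > 0, and let Q : (0,∞) → ℝ be a positive non-decreasing function with Q(t) = o(t²) as t → +∞. Let a, b : ℝ^m → ℝ be continuous functions such that b(x) ≥ 1/Q(|x|) for |x| > 0, the negative part a_-(x) = max(−a(x), 0) is bounded on ℝ^m, and a_-(x)/b(x) ≤ H for all x ∈ ℝ^m. Suppose u ∈ C²(ℝ^m) is a non-negative function satisfying Δu(x) ≥ b(x) u(x)^σ + a(x) u(x) for all x ∈ ℝ^m, and liminf_{r→+∞} (Q(r)/r²) ∫_{B_r} |u|^p dx < +∞, where B_r is the Euclidean ball of radius r centered at the origin. Then u(x) ≤ H^{1/(σ−1)} for all x ∈ ℝ^m. -/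
open Filter Asymptotics

open Topology

lemma aux_second_deriv_test {g g' : ℝ → ℝ} {c : ℝ} (hmax : IsLocalMax g 0)
    (hg : ∀ᶠ t in 𝓝 (0:ℝ), HasDerivAt g (g' t) t) (hg' : HasDerivAt g' c 0) : c ≤ 0 := by
  by_contra hc
  replace hc : 0 < c := lt_of_not_ge hc
  have h0 : g' 0 = 0 := hmax.hasDerivAt_eq_zero hg.self_of_nhds
  have hslope : Tendsto (fun t => g' t / t) (𝓝[>] (0:ℝ)) (𝓝 c) := by
    have := hasDerivAt_iff_tendsto_slope.mp hg'
    have h2 : Tendsto (slope g' 0) (𝓝[>] (0:ℝ)) (𝓝 c) :=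
      this.mono_left (nhdsWithin_mono 0 (fun t ht => ne_of_gt ht))
    refine h2.congr (fun t => ?_)
    simp [slope, h0]
    ring
  have hpos : ∀ᶠ t in 𝓝[>] (0:ℝ), 0 < g' t := by
    have h3 : ∀ᶠ t in 𝓝[>] (0:ℝ), c/2 < g' t / t :=
      hslope.eventually (eventually_gt_nhds (half_lt_self hc))
    filter_upwards [h3, self_mem_nhdsWithin] with t ht ht0
    have : (0:ℝ) < t := ht0
    have h4 : 0 < g' t / t := lt_trans (by positivity) ht
    exact (div_pos_iff.mp h4).resolve_right (fun h => absurd this (not_lt.mpr h.2.le)) |>.1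
  rw [eventually_nhdsWithin_iff] at hpos
  obtain ⟨δ1, hδ1, h1⟩ := Metric.eventually_nhds_iff.mp hpos
  obtain ⟨δ2, hδ2, h2⟩ := Metric.eventually_nhds_iff.mp hg
  obtain ⟨δ3, hδ3, h3⟩ := Metric.eventually_nhds_iff.mp hmax
  set δ := min δ1 (min δ2 δ3) with hδdef
  have hδ : 0 < δ := lt_min hδ1 (lt_min hδ2 hδ3)
  have hmono : StrictMonoOn g (Set.Icc 0 (δ/2)) := by
    apply strictMonoOn_of_deriv_pos (convex_Icc _ _)
    · intro t ht
      have : dist t 0 < δ2 := by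
        rw [Real.dist_eq, sub_zero]
        rw [abs_of_nonneg ht.1]
        calc t ≤ δ/2 := ht.2
          _ < δ := by linarith
          _ ≤ δ2 := le_trans (min_le_right _ _) (min_le_left _ _)
      exact ((h2 this).continuousAt).continuousWithinAt
    · intro t ht
      rw [interior_Icc] at ht
      have hd2 : dist t 0 < δ2 := by
        rw [Real.dist_eq, sub_zero, abs_of_nonneg ht.1.le]
        calc t < δ/2 := ht.2
          _ < δ := by linarith
          _ ≤ δ2 := le_trans (min_le_right _ _) (min_le_left _ _)
      have hd1 : dist t 0 < δ1 := by
        rw [Real.dist_eq, sub_zero, abs_of_nonneg ht.1.le]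
        calc t < δ/2 := ht.2
          _ < δ := by linarith
          _ ≤ δ1 := min_le_left _ _
      rw [(h2 hd2).deriv]
      exact h1 hd1 ht.1
  have hlt : g 0 < g (δ/2) := by
    apply hmono (Set.left_mem_Icc.mpr (by linarith)) (Set.right_mem_Icc.mpr (by linarith))
    linarith
  have : g (δ/2) ≤ g 0 := by
    apply h3
    rw [Real.dist_eq, sub_zero, abs_of_nonneg (by linarith : (0:ℝ) ≤ δ/2)]
    calc δ/2 < δ := by linarith
      _ ≤ δ3 := le_trans (min_le_right _ _) (min_le_right _ _)
  linarith


variable {m : ℕ}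

noncomputable def Sb (x₀ : EuclideanSpace ℝ (Fin m)) (R : ℝ) (y : EuclideanSpace ℝ (Fin m)) : ℝ :=
  R^2 - ∑ j, (y j - x₀ j)^2

noncomputable def wb (x₀ : EuclideanSpace ℝ (Fin m)) (R lam : ℝ) (n : ℕ)
    (y : EuclideanSpace ℝ (Fin m)) : ℝ := lam * ((Sb x₀ R y)⁻¹)^n

noncomputable def Gb (x₀ : EuclideanSpace ℝ (Fin m)) (R lam : ℝ) (n : ℕ) (i : Fin m)
    (y : EuclideanSpace ℝ (Fin m)) : ℝ :=
  (2*lam*(n:ℝ)) * (((Sb x₀ R y)⁻¹)^(n+1) * (y i - x₀ i))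

lemma Sb_hasFDeriv (x₀ : EuclideanSpace ℝ (Fin m)) (R : ℝ) (y : EuclideanSpace ℝ (Fin m)) :
    HasFDerivAt (Sb x₀ R)
      (-(∑ j, (2*(y j - x₀ j)) • (EuclideanSpace.proj j : EuclideanSpace ℝ (Fin m) →L[ℝ] ℝ))) y := by
  have h1 : ∀ j : Fin m, HasFDerivAt (fun y : EuclideanSpace ℝ (Fin m) => (y j - x₀ j)^2)
      ((2*(y j - x₀ j)) • (EuclideanSpace.proj j : EuclideanSpace ℝ (Fin m) →L[ℝ] ℝ)) y := by
    intro j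
    have hp : HasDerivAt (fun t : ℝ => (t - x₀ j)^2) (2*(y j - x₀ j)) (y j) := by
      have := ((hasDerivAt_id (y j)).sub_const (x₀ j)).fun_pow 2
      simpa using this
    have := hp.comp_hasFDerivAt y
      ((EuclideanSpace.proj (𝕜 := ℝ) (ι := Fin m) j).hasFDerivAt (x := y))
    exact this
  have h2 := HasFDerivAt.fun_sum (fun j (_ : j ∈ Finset.univ) => h1 j)
  have h3 := h2.const_sub (R^2)
  exact h3

lemma Sb_deriv_apply (x₀ : EuclideanSpace ℝ (Fin m)) (y : EuclideanSpace ℝ (Fin m)) (i : Fin m) :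
    (-(∑ j, (2*(y j - x₀ j)) • (EuclideanSpace.proj j : EuclideanSpace ℝ (Fin m) →L[ℝ] ℝ)))
      (EuclideanSpace.single i 1) = -(2*(y i - x₀ i)) := by
  simp [ContinuousLinearMap.sum_apply, EuclideanSpace.single_apply, mul_ite,
    Finset.sum_ite_eq]

lemma wb_hasFDeriv (x₀ : EuclideanSpace ℝ (Fin m)) (R lam : ℝ) (n : ℕ) (hn : 1 ≤ n)
    (y : EuclideanSpace ℝ (Fin m)) (hy : Sb x₀ R y ≠ 0) :
    ∃ L : EuclideanSpace ℝ (Fin m) →L[ℝ] ℝ, HasFDerivAt (wb x₀ R lam n) L y ∧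
      ∀ i, L (EuclideanSpace.single i 1) = Gb x₀ R lam n i y := by
  set s := Sb x₀ R y with hs
  have hψ : HasDerivAt (fun t : ℝ => lam * (t⁻¹)^n)
      (lam * ((n * (s⁻¹)^(n-1)) * (-(s^2)⁻¹))) s := by
    exact ((hasDerivAt_inv hy).pow n).const_mul lam
  have hL := hψ.comp_hasFDerivAt y (Sb_hasFDeriv x₀ R y)
  refine ⟨_, hL, fun i => ?_⟩
  rw [ContinuousLinearMap.smul_apply, Sb_deriv_apply]
  show lam * ((n * (s⁻¹)^(n-1)) * (-(s^2)⁻¹)) * (-(2*(y i - x₀ i))) = _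
  have hpow : (s⁻¹)^(n-1) * (s^2)⁻¹ = (s⁻¹)^(n+1) := by
    rw [← inv_pow, ← pow_add]
    congr 1
    omega
  calc lam * ((n * (s⁻¹)^(n-1)) * (-(s^2)⁻¹)) * (-(2*(y i - x₀ i)))
      = (2*lam*(n:ℝ)) * (((s⁻¹)^(n-1) * (s^2)⁻¹) * (y i - x₀ i)) := by ring
    _ = Gb x₀ R lam n i y := by rw [hpow]; rfl

lemma Gb_hasFDeriv (x₀ : EuclideanSpace ℝ (Fin m)) (R lam : ℝ) (n : ℕ) (i : Fin m)
    (y : EuclideanSpace ℝ (Fin m)) (hy : Sb x₀ R y ≠ 0) :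
    ∃ L : EuclideanSpace ℝ (Fin m) →L[ℝ] ℝ, HasFDerivAt (Gb x₀ R lam n i) L y ∧
      L (EuclideanSpace.single i 1) =
        4*lam*(n:ℝ)*((n:ℝ)+1)*((Sb x₀ R y)⁻¹)^(n+2)*(y i - x₀ i)^2
          + 2*lam*(n:ℝ)*((Sb x₀ R y)⁻¹)^(n+1) := by
  set s := Sb x₀ R y with hs
  have hψ : HasDerivAt (fun t : ℝ => (t⁻¹)^(n+1))
      ((((n:ℝ)+1) * (s⁻¹)^n) * (-(s^2)⁻¹)) s := by
    have := (hasDerivAt_inv hy).fun_pow (n+1)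
    simpa [Nat.add_sub_cancel] using this
  have hA := hψ.comp_hasFDerivAt y (Sb_hasFDeriv x₀ R y)
  have hB : HasFDerivAt (fun y : EuclideanSpace ℝ (Fin m) => y i - x₀ i)
      (EuclideanSpace.proj (𝕜 := ℝ) (ι := Fin m) i) y :=
    ((EuclideanSpace.proj (𝕜 := ℝ) (ι := Fin m) i).hasFDerivAt (x := y)).sub_const (x₀ i)
  have hmul := (hA.mul hB).const_mul (2*lam*(n:ℝ))
  refine ⟨_, hmul, ?_⟩
  have hproj : (EuclideanSpace.proj (𝕜 := ℝ) (ι := Fin m) i) (EuclideanSpace.single i 1) = 1 := by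
    simp [EuclideanSpace.single_apply]
  have hSd := Sb_deriv_apply x₀ y i
  have hpow2 : (s⁻¹)^n * (s^2)⁻¹ = (s⁻¹)^(n+2) := by
    rw [← inv_pow, ← pow_add]
  simp only [ContinuousLinearMap.smul_apply, ContinuousLinearMap.add_apply, hproj, hSd,
    smul_eq_mul, Function.comp]
  rw [← hs, ← hpow2]
  ring

lemma Sb_continuous {m : ℕ} (x₀ : EuclideanSpace ℝ (Fin m)) (R : ℝ) :
    Continuous (Sb x₀ R) := by
  apply continuous_const.sub
  exact continuous_finset_sum _ (fun j _ =>
    (((EuclideanSpace.proj (𝕜 := ℝ) (ι := Fin m) j).continuous).sub continuous_const).pow 2)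

lemma lap_le_at_localMax {m : ℕ} (u : EuclideanSpace ℝ (Fin m) → ℝ) (hu : ContDiff ℝ 2 u)
    (x₀ : EuclideanSpace ℝ (Fin m)) (R lam : ℝ) (n : ℕ) (hn : 1 ≤ n)
    (x₁ : EuclideanSpace ℝ (Fin m)) (hx₁ : 0 < Sb x₀ R x₁)
    (hmax : IsLocalMax (fun y => u y - wb x₀ R lam n y) x₁) :
    euclideanLaplacian u x₁ ≤
      ∑ i, (4*lam*(n:ℝ)*((n:ℝ)+1)*((Sb x₀ R x₁)⁻¹)^(n+2)*(x₁ i - x₀ i)^2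
          + 2*lam*(n:ℝ)*((Sb x₀ R x₁)⁻¹)^(n+1)) := by
  rw [euclideanLaplacian]
  apply Finset.sum_le_sum
  intro i _
  set e : EuclideanSpace ℝ (Fin m) := EuclideanSpace.single i 1 with he
  -- the line through x₁ in direction e
  set ℓ : ℝ → EuclideanSpace ℝ (Fin m) := fun t => x₁ + t • e with hℓdef
  have hℓ : ∀ t : ℝ, HasDerivAt ℓ e t := by
    intro t
    have := ((hasDerivAt_id t).smul_const e).const_add x₁
    simpa [hℓdef] using this
  have hℓ0 : ℓ 0 = x₁ := by simp [hℓdef]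
  have hℓcont : Continuous ℓ := continuous_const.add (continuous_id.smul continuous_const)
  have hev : ∀ᶠ y in 𝓝 x₁, 0 < Sb x₀ R y := by
    filter_upwards [(Sb_continuous x₀ R).continuousAt.preimage_mem_nhds
      (Ioi_mem_nhds hx₁)] with y hy
    exact hy
  have hℓ0' : Tendsto ℓ (𝓝 0) (𝓝 x₁) := by
    have h := hℓcont.continuousAt (x := (0:ℝ))
    unfold ContinuousAt at h
    rwa [hℓ0] at h
  have heve : ∀ᶠ t in 𝓝 (0:ℝ), 0 < Sb x₀ R (ℓ t) := hℓ0'.eventually hev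
  have hudiff : Differentiable ℝ u := hu.differentiable (by norm_num)
  have hF : ContDiff ℝ 1 (fun y => fderiv ℝ u y e) :=
    (hu.fderiv_right (by norm_num)).clm_apply contDiff_const
  -- first derivative along the line
  set g' : ℝ → ℝ := fun t => fderiv ℝ u (ℓ t) e - Gb x₀ R lam n i (ℓ t) with hg'def
  have hg : ∀ᶠ t in 𝓝 (0:ℝ), HasDerivAt (fun t => u (ℓ t) - wb x₀ R lam n (ℓ t)) (g' t) t := by
    filter_upwards [heve] with t ht
    obtain ⟨L, hL, hLe⟩ := wb_hasFDeriv x₀ R lam n hn (ℓ t) (ne_of_gt ht)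
    have h1 : HasDerivAt (fun t => u (ℓ t)) (fderiv ℝ u (ℓ t) e) t :=
      ((hudiff (ℓ t)).hasFDerivAt).comp_hasDerivAt t (hℓ t)
    have h2 : HasDerivAt (fun t => wb x₀ R lam n (ℓ t)) (L e) t :=
      hL.comp_hasDerivAt t (hℓ t)
    rw [hLe i] at h2
    exact h1.sub h2
  -- second derivative at 0
  obtain ⟨L2, hL2, hL2e⟩ := Gb_hasFDeriv x₀ R lam n i x₁ (ne_of_gt hx₁)
  have h3 : HasDerivAt (fun t => fderiv ℝ u (ℓ t) e)
      (fderiv ℝ (fun y => fderiv ℝ u y e) x₁ e) 0 := by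
    have hdF : HasFDerivAt (fun y => fderiv ℝ u y e)
        (fderiv ℝ (fun y => fderiv ℝ u y e) x₁) (ℓ 0) := by
      rw [hℓ0]
      exact ((hF.differentiable (by norm_num)) x₁).hasFDerivAt
    exact hdF.comp_hasDerivAt 0 (hℓ 0)
  have h4 : HasDerivAt (fun t => Gb x₀ R lam n i (ℓ t)) (L2 e) 0 := by
    have hdG : HasFDerivAt (Gb x₀ R lam n i) L2 (ℓ 0) := by rw [hℓ0]; exact hL2
    exact hdG.comp_hasDerivAt 0 (hℓ 0)
  have hg' : HasDerivAt g' (fderiv ℝ (fun y => fderiv ℝ u y e) x₁ e - L2 e) 0 := h3.sub h4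
  have hgmax : IsLocalMax (fun t => u (ℓ t) - wb x₀ R lam n (ℓ t)) 0 := by
    have h5 : ∀ᶠ t in 𝓝 (0:ℝ), u (ℓ t) - wb x₀ R lam n (ℓ t) ≤ u x₁ - wb x₀ R lam n x₁ :=
      hℓ0'.eventually hmax
    simpa [IsLocalMax, IsMaxFilter, hℓ0] using h5
  have := aux_second_deriv_test hgmax hg hg'
  rw [hL2e] at this
  linarith

lemma aux_tangent {σ : ℝ} (hσ : 1 ≤ σ) {x y : ℝ} (hy : 0 < y) (hxy : y ≤ x) :
    y^σ + σ*y^(σ-1)*(x-y) ≤ x^σ := by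
  have hs : (0:ℝ) ≤ (x-y)/y := div_nonneg (by linarith) hy.le
  have hb := one_add_mul_self_le_rpow_one_add (by linarith : (-1:ℝ) ≤ (x-y)/y) hσ
  have h1 : y^σ * (1 + σ*((x-y)/y)) ≤ y^σ * (1+(x-y)/y)^σ :=
    mul_le_mul_of_nonneg_left hb (Real.rpow_nonneg hy.le σ)
  have h2 : y^σ * (1+(x-y)/y)^σ = x^σ := by
    rw [← Real.mul_rpow hy.le (by positivity)]
    congr 1
    field_simp
    ring
  have h3 : y^σ * (1 + σ*((x-y)/y)) = y^σ + σ*y^(σ-1)*(x-y) := by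
    have hyσ : y^σ = y^(σ-1) * y := by
      rw [← Real.rpow_add_one hy.ne' (σ-1)]
      ring_nf
    rw [hyσ]
    field_simp
  linarith [h1, h2 ▸ h1]

lemma aux_superadd {σ : ℝ} (hσ : 1 ≤ σ) {x y : ℝ} (hx : 0 ≤ x) (hy : 0 ≤ y) :
    x^σ + y^σ ≤ (x+y)^σ := by
  have := NNReal.add_rpow_le_rpow_add (x.toNNReal) (y.toNNReal) hσ
  have hco := NNReal.coe_le_coe.mpr this
  rw [NNReal.coe_rpow] at hco
  push_cast at hco
  rwa [Real.coe_toNNReal x hx, Real.coe_toNNReal y hy] at hco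

lemma aux_key_rpow {σ : ℝ} (hσ : 1 < σ) {ε R Qb c0 C₀ s : ℝ} (n : ℕ)
    (hε : 0 < ε) (hR : 1 ≤ R) (hQb : 0 < Qb) (hc0 : 0 < c0) (hC₀ : 0 < C₀)
    (hs : 0 < s) (hsR : s ≤ R^2)
    (hnσ : 2 ≤ (n:ℝ)*(σ-1))
    (hkey : C₀ / c0 * Qb ≤ ε^(σ-1) * R^2) :
    C₀ * (ε * R^(2*n)) * R^2 * (s⁻¹)^(n+2) ≤ (c0/Qb) * ((ε * R^(2*n)) * (s⁻¹)^n)^σ := by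
  set lam := ε * R^(2*n) with hlamdef
  have hR0 : (0:ℝ) < R := lt_of_lt_of_le one_pos hR
  have hlam : 0 < lam := by positivity
  have hti : 0 < s⁻¹ := inv_pos.mpr hs
  have he : 0 ≤ (n:ℝ)*σ - (n:ℝ) - 2 := by nlinarith
  set e := (n:ℝ)*σ - (n:ℝ) - 2 with hedef
  have hεσ : 0 < ε ^ (σ-1) := Real.rpow_pos_of_pos hε _
  have h1 : (lam * (s⁻¹)^n)^σ = lam^σ * (s⁻¹)^((n:ℝ)*σ) := by
    rw [Real.mul_rpow hlam.le (by positivity), ← Real.rpow_natCast s⁻¹ n,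
      ← Real.rpow_mul hti.le]
  have h2 : lam^σ = lam * lam^(σ-1) := by
    nth_rewrite 1 [show σ = 1 + (σ-1) by ring]
    rw [Real.rpow_add hlam, Real.rpow_one]
  have h3 : (s⁻¹)^((n:ℝ)*σ) = (s⁻¹)^(n+2) * (s⁻¹)^e := by
    rw [← Real.rpow_natCast s⁻¹ (n+2), ← Real.rpow_add hti]
    congr 1
    push_cast
    ring
  have h4 : lam^(σ-1) = ε^(σ-1) * R^(2*(n:ℝ)*(σ-1)) := by
    rw [hlamdef, Real.mul_rpow hε.le (by positivity), ← Real.rpow_natCast R (2*n),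
      ← Real.rpow_mul hR0.le]
    congr 2
    push_cast
    ring
  have h6 : R ^ (-(2*e)) ≤ (s⁻¹)^e := by
    have hinv : (R^2)⁻¹ ≤ s⁻¹ := by
      apply inv_anti₀ hs hsR
    have h7 : ((R^2)⁻¹) ^ e ≤ (s⁻¹)^e := Real.rpow_le_rpow (by positivity) hinv he
    have h8 : R ^ (-(2*e)) = ((R^2)⁻¹)^e := by
      rw [← Real.rpow_natCast R 2, ← Real.rpow_neg hR0.le, ← Real.rpow_mul hR0.le]
      congr 1
      push_cast
      ring
    rw [h8]
    exact h7
  have h9 : R ^ (2*(n:ℝ)*(σ-1)) * R ^ (-(2*e)) = R^2 * R^2 := by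
    rw [← Real.rpow_add hR0]
    have h10 : 2*(n:ℝ)*(σ-1) + -(2*e) = 4 := by rw [hedef]; ring
    rw [h10, show (4:ℝ) = ((4:ℕ):ℝ) by norm_num, Real.rpow_natCast]
    ring
  -- main chain
  have hX : 0 < (s⁻¹:ℝ)^(n+2) := pow_pos hti _
  have hse : 0 < (s⁻¹:ℝ)^e := Real.rpow_pos_of_pos hti _
  rw [h1, h2, h3, h4]
  -- goal : C₀ * lam * R^2 * X ≤ (c0/Qb) * (lam * (ε^(σ-1)*R^(2n(σ-1)))) * (X * (s⁻¹)^e)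
  have hstep : C₀ * R^2 ≤ (c0/Qb) * (ε^(σ-1) * R^(2*(n:ℝ)*(σ-1))) * (s⁻¹)^e := by
    have hRpow : 0 < R ^ (2*(n:ℝ)*(σ-1)) := Real.rpow_pos_of_pos hR0 _
    have hb1 : (c0/Qb) * (ε^(σ-1) * R^(2*(n:ℝ)*(σ-1))) * (R ^ (-(2*e)))
        ≤ (c0/Qb) * (ε^(σ-1) * R^(2*(n:ℝ)*(σ-1))) * (s⁻¹)^e := by
      apply mul_le_mul_of_nonneg_left h6
      positivity
    have hb2 : C₀ * R^2 ≤ (c0/Qb) * (ε^(σ-1) * R^(2*(n:ℝ)*(σ-1))) * (R ^ (-(2*e))) := by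
      have h11 : (c0/Qb) * (ε^(σ-1) * R^(2*(n:ℝ)*(σ-1))) * (R ^ (-(2*e)))
          = (c0/Qb) * ε^(σ-1) * (R^2 * R^2) := by
        rw [← h9]; ring
      rw [h11]
      have h12 : C₀ ≤ (c0/Qb) * (ε^(σ-1) * R^2) := by
        rw [div_mul_eq_mul_div, le_div_iff₀ hQb]
        have hmm := mul_le_mul_of_nonneg_right hkey hc0.le
        have hch : C₀ / c0 * Qb * c0 = C₀ * Qb := by field_simp
        nlinarith [hmm, hch]
      calc C₀ * R^2 ≤ ((c0/Qb) * (ε^(σ-1) * R^2)) * R^2 := by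
            apply mul_le_mul_of_nonneg_right h12 (by positivity)
        _ = c0 / Qb * ε ^ (σ - 1) * (R ^ 2 * R ^ 2) := by ring
    linarith
  calc C₀ * lam * R^2 * (s⁻¹)^(n+2) = (C₀ * R^2) * (lam * (s⁻¹)^(n+2)) := by ring
    _ ≤ ((c0/Qb) * (ε^(σ-1) * R^(2*(n:ℝ)*(σ-1))) * (s⁻¹)^e) * (lam * (s⁻¹)^(n+2)) := by
        apply mul_le_mul_of_nonneg_right hstep (by positivity)
    _ = c0 / Qb * (lam * (ε ^ (σ - 1) * R ^ (2 * (n:ℝ) * (σ - 1))) * ((s⁻¹)^(n+2) * (s⁻¹)^e)) := by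
        ring

lemma aux_bpos {m : ℕ} (hm : 2 ≤ m) (Q : ℝ → ℝ) (hQpos : ∀ t > (0:ℝ), 0 < Q t)
    (hQmono : ∀ s t : ℝ, 0 < s → s ≤ t → Q s ≤ Q t)
    (b : EuclideanSpace ℝ (Fin m) → ℝ) (hb : Continuous b)
    (hbQ : ∀ x : EuclideanSpace ℝ (Fin m), 0 < ‖x‖ → 1 / Q ‖x‖ ≤ b x) :
    ∀ (x : EuclideanSpace ℝ (Fin m)) (t : ℝ), 0 < t → ‖x‖ ≤ t → 1 / Q t ≤ b x := by
  intro x t ht hxt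
  have hQt := hQpos t ht
  rcases eq_or_lt_of_le (norm_nonneg x) with h0 | hx
  · -- x = 0, use continuity
    have hx0 : x = 0 := norm_eq_zero.mp h0.symm
    subst hx0
    set z : ℕ → EuclideanSpace ℝ (Fin m) :=
      fun k => (t/((k:ℝ)+1)) • EuclideanSpace.single (⟨0, by omega⟩ : Fin m) 1 with hzdef
    have hznorm : ∀ k, ‖z k‖ = t/((k:ℝ)+1) := by
      intro k
      rw [hzdef]
      simp only [norm_smul, EuclideanSpace.norm_single, norm_one, mul_one, Real.norm_eq_abs]
      exact abs_of_pos (by positivity)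
    have hz0 : Tendsto z atTop (𝓝 0) := by
      rw [tendsto_zero_iff_norm_tendsto_zero]
      simp only [hznorm]
      have h1 : Tendsto (fun k : ℕ => 1/((k:ℝ)+1)) atTop (𝓝 0) :=
        tendsto_one_div_add_atTop_nhds_zero_nat
      have := h1.const_mul t
      simpa [mul_one_div, div_eq_mul_inv] using this
    have hbz : ∀ k, 1/Q t ≤ b (z k) := by
      intro k
      have hzpos : 0 < ‖z k‖ := by rw [hznorm]; positivity
      have hzt : ‖z k‖ ≤ t := by
        rw [hznorm]
        apply div_le_self ht.le
        have : (0:ℝ) ≤ (k:ℝ) := Nat.cast_nonneg k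
        linarith
      calc 1/Q t ≤ 1/Q ‖z k‖ :=
            one_div_le_one_div_of_le (hQpos _ hzpos) (hQmono _ _ hzpos hzt)
        _ ≤ b (z k) := hbQ _ hzpos
    have hlim : Tendsto (fun k => b (z k)) atTop (𝓝 (b 0)) := (hb.tendsto 0).comp hz0
    exact ge_of_tendsto' hlim hbz
  · calc 1/Q t ≤ 1/Q ‖x‖ :=
        one_div_le_one_div_of_le (hQpos _ hx) (hQmono _ _ hx hxt)
    _ ≤ b x := hbQ _ hx


theorem stmt16 {m : ℕ} (hm : 2 ≤ m) (σ H p : ℝ) (hσ : 1 < σ) (hH : 0 < H) (hp : 0 < p)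
    (Q : ℝ → ℝ)
    (hQpos : ∀ t > (0:ℝ), 0 < Q t)
    (hQmono : ∀ s t : ℝ, 0 < s → s ≤ t → Q s ≤ Q t)
    (hQo : Q =o[atTop] fun t => t ^ 2)
    (a b : EuclideanSpace ℝ (Fin m) → ℝ) (ha : Continuous a) (hb : Continuous b)
    (hbQ : ∀ x : EuclideanSpace ℝ (Fin m), 0 < ‖x‖ → 1 / Q ‖x‖ ≤ b x)
    (haminus : ∃ C : ℝ, ∀ x, max (-a x) 0 ≤ C)
    (haH : ∀ x, max (-a x) 0 / b x ≤ H)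
    (u : EuclideanSpace ℝ (Fin m) → ℝ) (hu : ContDiff ℝ 2 u)
    (hupos : ∀ x, 0 ≤ u x)
    (hineq : ∀ x, b x * u x ^ σ + a x * u x ≤ euclideanLaplacian u x)
    (hliminf : ∃ C : ℝ, ∃ᶠ r in atTop,
      Q r / r ^ 2 * ∫ x in Metric.ball (0 : EuclideanSpace ℝ (Fin m)) r, |u x| ^ p ≤ C) :
    ∀ x, u x ≤ H ^ (1 / (σ - 1)) := by

  intro x₀
  have hσ1 : (0:ℝ) < σ - 1 := by linarith
  have hσ0 : (0:ℝ) < σ := by linarith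
  set K := H ^ (1/(σ-1)) with hKdef
  have hK : 0 < K := Real.rpow_pos_of_pos hH _
  have hKσ : K ^ (σ-1) = H := by
    rw [hKdef, ← Real.rpow_mul hH.le]
    rw [show 1/(σ-1)*(σ-1) = 1 by field_simp]
    exact Real.rpow_one H
  have hbQ' := aux_bpos hm Q hQpos hQmono b hb hbQ
  by_contra hcon
  push_neg at hcon
  set ε := (u x₀ - K)/2 with hεdef
  have hε : 0 < ε := by rw [hεdef]; linarith only [hcon]
  -- constants
  set n : ℕ := max 1 ⌈2/(σ-1)⌉₊ with hndef
  have hn1 : 1 ≤ n := le_max_left _ _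
  have hnσ : 2 ≤ (n:ℝ)*(σ-1) := by
    have h1 : 2/(σ-1) ≤ (⌈2/(σ-1)⌉₊ : ℝ) := Nat.le_ceil _
    have h2 : ((⌈2/(σ-1)⌉₊ : ℕ):ℝ) ≤ (n:ℝ) := by
      exact_mod_cast le_max_right 1 ⌈2/(σ-1)⌉₊
    have h3 := le_trans h1 h2
    rw [div_le_iff₀ hσ1] at h3
    linarith only [h3]
  set c0 : ℝ := (σ-1)/σ with hc0def
  have hc0 : 0 < c0 := div_pos hσ1 hσ0
  set C₀ : ℝ := 4*(n:ℝ)*((n:ℝ)+1) + 2*(n:ℝ)*(m:ℝ) with hC₀def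
  have hC₀ : 0 < C₀ := by
    have h1 : (1:ℝ) ≤ (n:ℝ) := by exact_mod_cast hn1
    have h2 : (0:ℝ) ≤ (m:ℝ) := Nat.cast_nonneg m
    nlinarith
  have hεσ : 0 < ε^(σ-1) := Real.rpow_pos_of_pos hε _
  -- choice of R
  set η := ε^(σ-1) * c0 / (4*C₀) with hηdef
  have hη : 0 < η := by positivity
  obtain ⟨t₀, ht₀⟩ := eventually_atTop.mp (hQo.def hη)
  set R := max (max 1 ‖x₀‖) t₀ with hRdef
  have hR1 : 1 ≤ R := le_trans (le_max_left _ _) (le_max_left _ _)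
  have hRx : ‖x₀‖ ≤ R := le_trans (le_max_right _ _) (le_max_left _ _)
  have hRt₀ : t₀ ≤ R := le_max_right _ _
  have hR0 : 0 < R := lt_of_lt_of_le one_pos hR1
  set T := ‖x₀‖ + R with hTdef
  have hT0 : 0 < T := by positivity
  have hTt₀ : t₀ ≤ T := by
    have := norm_nonneg x₀
    rw [hTdef]; linarith only [hRt₀, norm_nonneg x₀]
  have hT2R : T ≤ 2*R := by rw [hTdef]; linarith only [hRx]
  have hQT : Q T ≤ η * T^2 := by
    have h1 := ht₀ T hTt₀
    rw [Real.norm_eq_abs, Real.norm_eq_abs, abs_of_nonneg (by positivity : (0:ℝ) ≤ T^2)] at h1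
    linarith only [h1, le_abs_self (Q T)]
  set Qb := Q T with hQbdef
  have hQb : 0 < Qb := hQpos T hT0
  have hkey : C₀ / c0 * Qb ≤ ε^(σ-1) * R^2 := by
    have hT2 : T^2 ≤ 4*R^2 := by
      calc T^2 = T*T := pow_two T
        _ ≤ (2*R)*(2*R) := mul_self_le_mul_self hT0.le hT2R
        _ = 4*R^2 := by ring
    have h1 : Qb ≤ 4*η*R^2 := by
      have h1a : η*T^2 ≤ η*(4*R^2) := mul_le_mul_of_nonneg_left hT2 hη.le
      have h1b : η*(4*R^2) = 4*η*R^2 := by ring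
      linarith only [hQT, h1a, h1b]
    have h2 : C₀/c0 * Qb ≤ C₀/c0 * (4*η*R^2) :=
      mul_le_mul_of_nonneg_left h1 (by positivity)
    have h3 : C₀/c0 * (4*η*R^2) = ε^(σ-1) * R^2 := by
      rw [hηdef]; field_simp
    linarith only [h2, h3]
  set lam := ε * R^(2*n) with hlamdef
  have hlam : 0 < lam := by positivity
  -- geometry of the barrier
  have hSdist : ∀ y : EuclideanSpace ℝ (Fin m), Sb x₀ R y = R^2 - dist y x₀^2 := by
    intro y
    have h1 : dist y x₀^2 = ∑ i, (y i - x₀ i)^2 := by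
      rw [EuclideanSpace.dist_eq, Real.sq_sqrt (Finset.sum_nonneg fun i _ => sq_nonneg _)]
      exact Finset.sum_congr rfl (fun i _ => by rw [Real.dist_eq, sq_abs])
    show R^2 - ∑ i, (y i - x₀ i)^2 = R^2 - dist y x₀^2
    rw [h1]
  have hSx₀ : Sb x₀ R x₀ = R^2 := by rw [hSdist]; simp
  have hwx₀ : wb x₀ R lam n x₀ = ε := by
    rw [wb, hSx₀, inv_pow, ← pow_mul, hlamdef]
    field_simp
  -- max of u on the big ball
  obtain ⟨z, hzmem, hzmax⟩ := (isCompact_closedBall x₀ R).exists_isMaxOn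
    ⟨x₀, Metric.mem_closedBall_self hR0.le⟩ (hu.continuous.continuousOn)
  set M := u z with hMdef
  set δ₀ := min (R^2/2) (min 1 (lam / (max (M - K) 1))) with hδ₀def
  have hmx : (0:ℝ) < max (M-K) 1 := lt_of_lt_of_le one_pos (le_max_right _ _)
  have hδ₀ : 0 < δ₀ := lt_min (by positivity) (lt_min one_pos (by positivity))
  have hδ₀R : δ₀ ≤ R^2/2 := min_le_left _ _
  have hδ₀1 : δ₀ ≤ 1 := le_trans (min_le_right _ _) (min_le_left _ _)
  have hδ₀lam : δ₀ ≤ lam / max (M-K) 1 := le_trans (min_le_right _ _) (min_le_right _ _)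
  set R' := Real.sqrt (R^2 - δ₀) with hR'def
  have hR2pos : 0 < R^2 := by positivity
  have hR'sq : R'^2 = R^2 - δ₀ := Real.sq_sqrt (by linarith only [hδ₀R, hR2pos])
  have hR'0 : 0 < R' := Real.sqrt_pos.mpr (by linarith only [hδ₀R, hR2pos])
  have hR'R : R' ≤ R := by
    rw [hR'def]
    calc Real.sqrt (R^2 - δ₀) ≤ Real.sqrt (R^2) := Real.sqrt_le_sqrt (by linarith only [hδ₀])
      _ = R := Real.sqrt_sq hR0.le
  have hSlb : ∀ y ∈ Metric.closedBall x₀ R', δ₀ ≤ Sb x₀ R y := by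
    intro y hy
    rw [hSdist y]
    have hd : dist y x₀ ≤ R' := Metric.mem_closedBall.mp hy
    have h2 : dist y x₀^2 ≤ R'^2 := pow_le_pow_left₀ dist_nonneg hd 2
    linarith only [h2, hR'sq]
  -- max of φ on the small closed ball
  have hwcont : ContinuousOn (fun y => u y - wb x₀ R lam n y) (Metric.closedBall x₀ R') := by
    apply ContinuousOn.sub (hu.continuous.continuousOn)
    apply ContinuousOn.mul continuousOn_const
    apply ContinuousOn.pow
    apply ContinuousOn.inv₀ (Sb_continuous x₀ R).continuousOn
    intro y hy
    exact ne_of_gt (lt_of_lt_of_le hδ₀ (hSlb y hy))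
  obtain ⟨x₁, hx₁mem, hx₁max⟩ := (isCompact_closedBall x₀ R').exists_isMaxOn
    ⟨x₀, Metric.mem_closedBall_self hR'0.le⟩ hwcont
  have hφ₀ : K < u x₀ - wb x₀ R lam n x₀ := by rw [hwx₀, hεdef]; linarith only [hcon]
  have hφ₁ : K < u x₁ - wb x₀ R lam n x₁ :=
    lt_of_lt_of_le hφ₀ (hx₁max (Metric.mem_closedBall_self hR'0.le))
  have hx₁M : u x₁ ≤ M :=
    hzmax (Metric.closedBall_subset_closedBall hR'R hx₁mem)
  have hx₁lt : dist x₁ x₀ < R' := by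
    rcases lt_or_eq_of_le (Metric.mem_closedBall.mp hx₁mem) with h | h
    · exact h
    · exfalso
      have hS₁ : Sb x₀ R x₁ = δ₀ := by rw [hSdist, h]; linarith only [hR'sq]
      have hw₁ : max (M-K) 1 ≤ wb x₀ R lam n x₁ := by
        rw [wb, hS₁]
        have hd1 : 1 ≤ δ₀⁻¹ := (one_le_inv₀ hδ₀).mpr hδ₀1
        have hd2 : δ₀⁻¹ ≤ (δ₀⁻¹)^n := le_self_pow₀ hd1 (by omega)
        have hd3 : max (M-K) 1 ≤ lam * δ₀⁻¹ := by
          have h1 : δ₀ * max (M-K) 1 ≤ lam := (le_div_iff₀ hmx).mp hδ₀lam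
          rw [mul_comm lam δ₀⁻¹, ← div_eq_inv_mul, le_div_iff₀ hδ₀]
          linarith only [h1]
        calc max (M-K) 1 ≤ lam * δ₀⁻¹ := hd3
          _ ≤ lam * (δ₀⁻¹)^n := mul_le_mul_of_nonneg_left hd2 hlam.le
      have h4 : M - K ≤ max (M-K) 1 := le_max_left _ _
      linarith only [hφ₁, hx₁M, hw₁, h4]
  have hx₁S : 0 < Sb x₀ R x₁ := lt_of_lt_of_le hδ₀ (hSlb x₁ hx₁mem)
  have hx₁SR : Sb x₀ R x₁ ≤ R^2 := by
    rw [hSdist]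
    have h5 := sq_nonneg (dist x₁ x₀)
    linarith only [h5]
  have hloc : IsLocalMax (fun y => u y - wb x₀ R lam n y) x₁ :=
    hx₁max.isLocalMax (Metric.closedBall_mem_nhds_of_mem (Metric.mem_ball.mpr hx₁lt))
  -- Laplacian comparison at x₁
  have hLap := lap_le_at_localMax u hu x₀ R lam n hn1 x₁ hx₁S hloc
  set s := Sb x₀ R x₁ with hsdef
  have hsum : ∑ i, (x₁ i - x₀ i)^2 = R^2 - s := by
    rw [hsdef]
    simp only [Sb]
    ring
  have hΔv : ∑ i, (4*lam*(n:ℝ)*((n:ℝ)+1)*(s⁻¹)^(n+2)*(x₁ i - x₀ i)^2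
      + 2*lam*(n:ℝ)*(s⁻¹)^(n+1))
      = 4*lam*(n:ℝ)*((n:ℝ)+1)*(s⁻¹)^(n+2)*(R^2 - s) + (m:ℝ)*(2*lam*(n:ℝ)*(s⁻¹)^(n+1)) := by
    rw [Finset.sum_add_distrib, ← Finset.mul_sum, hsum, Finset.sum_const,
      Finset.card_univ, Fintype.card_fin, nsmul_eq_mul]
  have hsinv : 0 < s⁻¹ := inv_pos.mpr hx₁S
  have hlapbound : euclideanLaplacian u x₁ ≤ C₀ * lam * R^2 * (s⁻¹)^(n+2) := by
    rw [hΔv] at hLap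
    refine le_trans hLap ?_
    have h1 : (s⁻¹)^(n+1) = s * (s⁻¹)^(n+2) := by
      rw [pow_succ (s⁻¹) (n+1)]
      field_simp
    have h2 : 4*lam*(n:ℝ)*((n:ℝ)+1)*(s⁻¹)^(n+2)*(R^2 - s)
        ≤ 4*lam*(n:ℝ)*((n:ℝ)+1)*(s⁻¹)^(n+2)*R^2 := by
      apply mul_le_mul_of_nonneg_left _ (by positivity)
      linarith only [hx₁S]
    have h3 : (m:ℝ)*(2*lam*(n:ℝ)*(s⁻¹)^(n+1)) ≤ (m:ℝ)*(2*lam*(n:ℝ)*(R^2*(s⁻¹)^(n+2))) := by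
      apply mul_le_mul_of_nonneg_left _ (Nat.cast_nonneg m)
      apply mul_le_mul_of_nonneg_left _ (by positivity)
      rw [h1]
      exact mul_le_mul_of_nonneg_right hx₁SR (by positivity)
    calc 4*lam*(n:ℝ)*((n:ℝ)+1)*(s⁻¹)^(n+2)*(R^2 - s) + (m:ℝ)*(2*lam*(n:ℝ)*(s⁻¹)^(n+1))
        ≤ 4*lam*(n:ℝ)*((n:ℝ)+1)*(s⁻¹)^(n+2)*R^2 + (m:ℝ)*(2*lam*(n:ℝ)*(R^2*(s⁻¹)^(n+2))) :=
          add_le_add h2 h3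
      _ = C₀ * lam * R^2 * (s⁻¹)^(n+2) := by rw [hC₀def]; ring
  have hrpow := aux_key_rpow hσ n hε hR1 hQb hc0 hC₀ hx₁S hx₁SR hnσ hkey
  rw [← hlamdef] at hrpow
  set W := wb x₀ R lam n x₁ with hWdef
  have hWeq : W = lam * (s⁻¹)^n := by rw [hWdef, wb]
  have hW : 0 < W := by rw [hWeq]; positivity
  set Ux := u x₁ with hUdef
  have hUW : K + W < Ux := by
    have h6 : K < Ux - W := hφ₁
    linarith only [h6]
  -- b bounds at x₁
  have hx₁T : ‖x₁‖ ≤ T := by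
    calc ‖x₁‖ = ‖x₀ + (x₁ - x₀)‖ := by rw [add_sub_cancel]
      _ ≤ ‖x₀‖ + ‖x₁ - x₀‖ := norm_add_le _ _
      _ = ‖x₀‖ + dist x₁ x₀ := by rw [dist_eq_norm]
      _ ≤ ‖x₀‖ + R := by linarith only [hx₁lt, hR'R]
  have hb₁ : 1/Qb ≤ b x₁ := hbQ' x₁ T hT0 hx₁T
  have hbpos : 0 < b x₁ := lt_of_lt_of_le (by positivity) hb₁
  have ham : -(H * b x₁) ≤ a x₁ := by
    have h1 := haH x₁
    rw [div_le_iff₀ hbpos] at h1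
    have h2 : -a x₁ ≤ max (-a x₁) 0 := le_max_left _ _
    linarith only [le_trans h2 h1]
  -- chain of inequalities
  have hA1 : b x₁ * (Ux^σ - H*Ux) ≤ euclideanLaplacian u x₁ := by
    have h0 := hineq x₁
    have h1 : -(H*b x₁)*Ux ≤ a x₁ * Ux := mul_le_mul_of_nonneg_right ham (hupos x₁)
    have h2 : b x₁ * (Ux^σ - H*Ux) = b x₁*Ux^σ + (-(H*b x₁)*Ux) := by ring
    rw [h2]
    calc b x₁*Ux^σ + (-(H*b x₁)*Ux) ≤ b x₁*Ux^σ + a x₁ * Ux := by linarith only [h1]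
      _ ≤ euclideanLaplacian u x₁ := h0
  have hKW : 0 < K + W := by linarith only [hK, hW]
  have htan1 := aux_tangent hσ.le hKW hUW.le
  have hpow1 : H ≤ (K+W)^(σ-1) := by
    rw [← hKσ]
    exact Real.rpow_le_rpow hK.le (by linarith only [hW]) (by linarith only [hσ1])
  have hA2 : (K+W)^σ - H*(K+W) < Ux^σ - H*Ux := by
    have hd : 0 < Ux - (K+W) := by linarith only [hUW]
    have h1 : σ*H*(Ux - (K+W)) ≤ σ*(K+W)^(σ-1)*(Ux-(K+W)) := by
      apply mul_le_mul_of_nonneg_right _ hd.le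
      exact mul_le_mul_of_nonneg_left hpow1 hσ0.le
    have h2 : 0 < (σ-1)*(H*(Ux-(K+W))) := mul_pos hσ1 (mul_pos hH hd)
    linarith only [htan1, h1, h2]
  have htan2 := aux_tangent hσ.le hK (le_add_of_nonneg_right hW.le : K ≤ K + W)
  have hsup := aux_superadd hσ.le hK.le hW.le
  have hKσσ : K^σ = K*H := by
    rw [show σ = 1 + (σ-1) by ring, Real.rpow_add hK, Real.rpow_one, hKσ]
  have hA3 : c0 * W^σ ≤ (K+W)^σ - H*(K+W) := by
    rw [hKσσ, hKσ] at htan2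
    rw [hKσσ] at hsup
    rw [hc0def, div_mul_eq_mul_div, div_le_iff₀ hσ0]
    have h3 := mul_le_mul_of_nonneg_left hsup (by linarith only [hσ1] : (0:ℝ) ≤ σ-1)
    linarith only [htan2, h3]
  have hA4 : euclideanLaplacian u x₁ ≤ (c0/Qb) * W^σ := by
    rw [hWeq]
    exact le_trans hlapbound hrpow
  have hWσ : 0 < W^σ := Real.rpow_pos_of_pos hW _
  have hfin1 : b x₁ * ((K+W)^σ - H*(K+W)) < b x₁ * (Ux^σ - H*Ux) :=
    mul_lt_mul_of_pos_left hA2 hbpos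
  have hfin2 : b x₁ * (c0 * W^σ) ≤ b x₁ * ((K+W)^σ - H*(K+W)) :=
    mul_le_mul_of_nonneg_left hA3 hbpos.le
  have hfin3 : (1/Qb) * (c0 * W^σ) ≤ b x₁ * (c0 * W^σ) :=
    mul_le_mul_of_nonneg_right hb₁ (by positivity)
  have hfin4 : (c0/Qb) * W^σ = (1/Qb) * (c0 * W^σ) := by ring
  linarith only [hA1, hA4, hfin1, hfin2, hfin3, hfin4]
end
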